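/- arXiv:2406.14853 — 6 statements merged into one kernel-verified Lean document; each statement's English description precedes it below -/
import Mathlib

section
/- Suppose (Ψ1), (Ψ3), (Φ1), (Φ2) hold. Assume there exist sequences {ε_j}, {λ_j} ⊂ (0,∞) and {u_j} ⊂ X with ε_j → 0, λ_j → λ ∈ (0,∞), u_j ⇀ u weakly in X, and λ_j(Ψ(v) − Ψ(u_j)) − Φ'(u_j)(v − u_j) ≥ −ε_j‖v − u_j‖ for every v ∈ X and every j. Then ‖u_j − u‖ → 0, u is a critical point of I_λ, and I_λ(u) = lim_{j→∞} I_{λ_j}(u_j) ∈ ℝ. In particular, every bounded Palais–Smale sequence for I_λ at any level c ∈ ℝ has a subsequence converging strongly in X. -/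
open Set Filter Metric Bornology Topology

noncomputable section

variable {X : Type*} [NormedAddCommGroup X] [NormedSpace ℝ X]

/-- a weakly convergent sequence is norm-bounded -/
lemma weak_bdd [CompleteSpace X] (u : ℕ → X) (w : X)
    (hw : ∀ f : X →L[ℝ] ℝ, Tendsto (fun j => f (u j)) atTop (𝓝 (f w))) :
    ∃ C : ℝ, ∀ j, ‖u j‖ ≤ C := by
  set g : ℕ → StrongDual ℝ X →L[ℝ] ℝ :=
    fun j => NormedSpace.inclusionInDoubleDualLi ℝ (u j) with hg
  have hpt : ∀ f : StrongDual ℝ X, ∃ C, ∀ j, ‖g j f‖ ≤ C := by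
    intro f
    have h1 : Tendsto (fun j => ‖f (u j)‖) atTop (𝓝 ‖f w‖) := (hw f).norm
    obtain ⟨C, hC⟩ := h1.bddAbove_range
    refine ⟨C, fun j => ?_⟩
    have : ‖f (u j)‖ ≤ C := hC (Set.mem_range_self j)
    simpa [hg, NormedSpace.inclusionInDoubleDualLi] using this
  obtain ⟨C, hC⟩ := banach_steinhaus hpt
  refine ⟨C, fun j => ?_⟩
  have := (NormedSpace.inclusionInDoubleDualLi (𝕜 := ℝ) (E := X)).norm_map (u j)
  rw [← this]
  exact hC j

/-- convex lsc functions are sequentially weakly lower semicontinuous -/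
lemma weak_lsc (Ψ : X → EReal)
    (hΨnn : ∀ u : X, 0 ≤ Ψ u)
    (hΨlsc : LowerSemicontinuous Ψ)
    (hΨconv : ∀ u v : X, ∀ a b : ℝ, 0 ≤ a → 0 ≤ b → a + b = 1 →
      Ψ (a • u + b • v) ≤ (a : EReal) * Ψ u + (b : EReal) * Ψ v)
    (u : ℕ → X) (w : X)
    (hw : ∀ f : X →L[ℝ] ℝ, Tendsto (fun j => f (u j)) atTop (𝓝 (f w))) :
    Ψ w ≤ Filter.liminf (fun j => Ψ (u j)) atTop := by
  by_contra h
  push_neg at h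
  obtain ⟨y, hy1, hy2⟩ := EReal.exists_between_coe_real h
  have hfreq : ∃ᶠ j in atTop, Ψ (u j) < (y : EReal) :=
    Filter.frequently_lt_of_liminf_lt (by isBoundedDefault) hy1
  obtain ⟨φ, hφmono, hφ⟩ := Filter.extraction_of_frequently_atTop hfreq
  set K : Set X := {x | Ψ x ≤ (y : EReal)} with hK
  have hKconv : Convex ℝ K := by
    intro p hp q hq a b ha hb hab
    have hpt : Ψ p ≠ ⊤ := fun ht => by simp [hK, ht] at hp
    have hpb : Ψ p ≠ ⊥ := fun hB => by simpa [hB] using hΨnn p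
    have hqt : Ψ q ≠ ⊤ := fun ht => by simp [hK, ht] at hq
    have hqb : Ψ q ≠ ⊥ := fun hB => by simpa [hB] using hΨnn q
    have h1 := hΨconv p q a b ha hb hab
    have h2 : (a : EReal) * Ψ p + (b : EReal) * Ψ q
        = ((a * (Ψ p).toReal + b * (Ψ q).toReal : ℝ) : EReal) := by
      rw [EReal.coe_add, EReal.coe_mul, EReal.coe_mul,
        EReal.coe_toReal hpt hpb, EReal.coe_toReal hqt hqb]
    have hple : (Ψ p).toReal ≤ y := by
      have := hp
      rw [hK, Set.mem_setOf_eq, ← EReal.coe_toReal hpt hpb, EReal.coe_le_coe_iff] at this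
      exact this
    have hqle : (Ψ q).toReal ≤ y := by
      have := hq
      rw [hK, Set.mem_setOf_eq, ← EReal.coe_toReal hqt hqb, EReal.coe_le_coe_iff] at this
      exact this
    have h3 : a * (Ψ p).toReal + b * (Ψ q).toReal ≤ y := by
      calc a * (Ψ p).toReal + b * (Ψ q).toReal ≤ a * y + b * y := by
            apply add_le_add (mul_le_mul_of_nonneg_left hple ha)
              (mul_le_mul_of_nonneg_left hqle hb)
        _ = y := by rw [← add_mul, hab, one_mul]
    refine le_trans h1 (h2 ▸ EReal.coe_le_coe_iff.2 h3)
  have hsub : Set.range (u ∘ φ) ⊆ K := by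
    rintro x ⟨j, rfl⟩
    exact le_of_lt (hφ j)
  have hhull : convexHull ℝ (Set.range (u ∘ φ)) ⊆ K := convexHull_min hsub hKconv
  have hwcl : w ∈ closure (convexHull ℝ (Set.range (u ∘ φ))) := by
    by_contra hw'
    obtain ⟨f, t, hft, htf⟩ := geometric_hahn_banach_closed_point
      ((convex_convexHull ℝ _).closure) isClosed_closure hw'
    have h1 : Tendsto (fun j => f (u (φ j))) atTop (𝓝 (f w)) :=
      (hw f).comp hφmono.tendsto_atTop
    have h2 : ∀ᶠ j in atTop, t < f (u (φ j)) :=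
      h1.eventually_const_lt htf
    obtain ⟨j, hj⟩ := h2.exists
    have : f (u (φ j)) < t :=
      hft _ (subset_closure (subset_convexHull ℝ _ (Set.mem_range_self j)))
    linarith
  have hopen : {x | (y : EReal) < Ψ x} ∈ 𝓝 w := hΨlsc w y hy2
  obtain ⟨x, hx1, hx2⟩ := mem_closure_iff_nhds.1 hwcl _ hopen
  have hxK : Ψ x ≤ (y : EReal) := hhull hx2
  exact not_le.2 hx1 hxK

lemma aux_main [CompleteSpace X] (Ψ : X → EReal) (Φ : X → ℝ)
    (hΨ0 : Ψ 0 = 0)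
    (hΨnn : ∀ u : X, 0 ≤ Ψ u)
    (hΨlsc : LowerSemicontinuous Ψ)
    (hΨconv : ∀ u v : X, ∀ a b : ℝ, 0 ≤ a → 0 ≤ b → a + b = 1 →
      Ψ (a • u + b • v) ≤ (a : EReal) * Ψ u + (b : EReal) * Ψ v)
    (hΨ3 : ∀ (u : ℕ → X) (w : X), (∀ j, Ψ (u j) ≠ ⊤) → Ψ w ≠ ⊤ →
      (∀ f : X →L[ℝ] ℝ, Tendsto (fun j => f (u j)) atTop (𝓝 (f w))) →
      Tendsto (fun j => Ψ (u j)) atTop (𝓝 (Ψ w)) →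
      Tendsto (fun j => ‖u j - w‖) atTop (𝓝 0))
    (hΦ2 : ∀ u : ℕ → X, IsBounded (range u) →
      ∃ (φ : ℕ → ℕ) (w : X), StrictMono φ ∧
        (∀ f : X →L[ℝ] ℝ, Tendsto (fun j => f (u (φ j))) atTop (𝓝 (f w))) ∧
        ∀ v : X, ((fderiv ℝ Φ w (v - w) : ℝ) : EReal) ≤
          Filter.liminf
            (fun j => ((fderiv ℝ Φ (u (φ j)) (v - u (φ j)) : ℝ) : EReal)) atTop)
    (εs lams : ℕ → ℝ) (u : ℕ → X) (lam : ℝ) (w : X)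
    (hε0 : ∀ j, 0 < εs j) (hεlim : Tendsto εs atTop (𝓝 0))
    (hl0 : ∀ j, 0 < lams j) (hlam : 0 < lam) (hllim : Tendsto lams atTop (𝓝 lam))
    (hweak : ∀ f : X →L[ℝ] ℝ, Tendsto (fun j => f (u j)) atTop (𝓝 (f w)))
    (hPS : ∀ (j : ℕ) (v : X),
        ((-(εs j * ‖v - u j‖) : ℝ) : EReal) ≤
          (lams j : EReal) * (Ψ v - Ψ (u j)) -
            ((fderiv ℝ Φ (u j) (v - u j) : ℝ) : EReal)) :
    Ψ w ≠ ⊤ ∧ ∃ φ : ℕ → ℕ, StrictMono φ ∧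
      Tendsto (fun j => Ψ (u (φ j))) atTop (𝓝 (Ψ w)) ∧
      Tendsto (fun j => ‖u (φ j) - w‖) atTop (𝓝 0) := by
  -- boundedness
  obtain ⟨C, hC⟩ := weak_bdd u w hweak
  have hC0 : (0:ℝ) ≤ C := le_trans (norm_nonneg (u 0)) (hC 0)
  -- finiteness of Ψ (u j)
  have hunt : ∀ j, Ψ (u j) ≠ ⊤ := by
    intro j htop
    have h := hPS j 0
    have h2 : ((lams j : EReal)) * ((0:EReal) - ⊤) -
        ((fderiv ℝ Φ (u j) ((0:X) - u j) : ℝ) : EReal) = ⊥ := by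
      rw [zero_sub, show (-(⊤:EReal)) = ⊥ from rfl, EReal.coe_mul_bot_of_pos (hl0 j)]
      simp
    rw [hΨ0, htop, h2, le_bot_iff] at h
    exact EReal.coe_ne_bot _ h
  have hunb : ∀ j, Ψ (u j) ≠ ⊥ := fun j hb => by simpa [hb] using hΨnn (u j)
  set ψ : ℕ → ℝ := fun j => (Ψ (u j)).toReal with hψdef
  have hψ : ∀ j, Ψ (u j) = ((ψ j : ℝ) : EReal) := fun j =>
    (EReal.coe_toReal (hunt j) (hunb j)).symm
  have hψnn : ∀ j, 0 ≤ ψ j := fun j => by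
    have := hΨnn (u j); rw [hψ j] at this; exact EReal.coe_nonneg.1 this
  -- real form of PS inequality
  have hPSr : ∀ (j : ℕ) (v : X), Ψ v ≠ ⊤ →
      -(εs j * ‖v - u j‖) ≤
        lams j * ((Ψ v).toReal - ψ j) - fderiv ℝ Φ (u j) (v - u j) := by
    intro j v hv
    have hvb : Ψ v ≠ ⊥ := fun hb => by simpa [hb] using hΨnn v
    have h := hPS j v
    rw [hψ j, ← EReal.coe_toReal hv hvb, ← EReal.coe_sub, ← EReal.coe_mul,
      ← EReal.coe_sub, EReal.coe_le_coe_iff] at h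
    exact h
  -- apply (Φ2)
  have hbdd : IsBounded (range u) := by
    rw [isBounded_iff_forall_norm_le]
    exact ⟨C, by rintro x ⟨j, rfl⟩; exact hC j⟩
  obtain ⟨φ, w', hφmono, hw'weak, hliminf⟩ := hΦ2 u hbdd
  have hφat : Tendsto φ atTop atTop := hφmono.tendsto_atTop
  have hww' : w' = w := by
    rw [NormedSpace.eq_iff_forall_dual_eq ℝ]
    intro g
    exact tendsto_nhds_unique (hw'weak g) ((hweak g).comp hφat)
  rw [hww'] at hliminf
  -- eventual lower bounds on derivative terms
  have hev : ∀ (v : X) (δ : ℝ), 0 < δ → ∀ᶠ j in atTop,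
      fderiv ℝ Φ w (v - w) - δ < fderiv ℝ Φ (u (φ j)) (v - u (φ j)) := by
    intro v δ hδ
    have h1 : ((fderiv ℝ Φ w (v - w) - δ : ℝ) : EReal) <
        Filter.liminf (fun j => ((fderiv ℝ Φ (u (φ j)) (v - u (φ j)) : ℝ) : EReal)) atTop :=
      lt_of_lt_of_le (EReal.coe_lt_coe_iff.2 (by linarith)) (hliminf v)
    filter_upwards [eventually_lt_of_lt_liminf h1] with j hj
    exact EReal.coe_lt_coe_iff.1 hj
  -- eventual facts about lams, εs along φ
  have hlams2 : ∀ᶠ j in atTop, lam / 2 < lams (φ j) :=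
    (hllim.comp hφat).eventually_const_lt (by linarith)
  have hεev : ∀ᶠ j in atTop, εs (φ j) < 1 :=
    (hεlim.comp hφat).eventually_lt_const (by norm_num)
  -- `Ψ w` is finite
  have hΨwle : Ψ w ≤ ((2 * (C + 1 + |fderiv ℝ Φ w ((0:X) - w)|) / lam : ℝ) : EReal) := by
    set B : ℝ := C + 1 + |fderiv ℝ Φ w ((0:X) - w)| with hB
    have hub : ∀ᶠ j in atTop, Ψ (u (φ j)) ≤ ((2 * B / lam : ℝ) : EReal) := by
      filter_upwards [hev 0 1 one_pos, hlams2, hεev] with j h1 h2 h3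
      have h4 := hPSr (φ j) 0 (by simp [hΨ0])
      rw [hΨ0, EReal.toReal_zero] at h4
      have h6 : ‖(0:X) - u (φ j)‖ ≤ C := by rw [zero_sub, norm_neg]; exact hC _
      have hεle : εs (φ j) * ‖(0:X) - u (φ j)‖ ≤ 1 * C :=
        mul_le_mul (le_of_lt h3) h6 (norm_nonneg _) zero_le_one
      have habs : -(fderiv ℝ Φ w ((0:X) - w) - 1) ≤ |fderiv ℝ Φ w ((0:X) - w)| + 1 := by
        cases abs_cases (fderiv ℝ Φ w ((0:X) - w)) with
        | inl hh => linarith [hh.1]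
        | inr hh => linarith [hh.1]
      have h8 : lams (φ j) * ψ (φ j) ≤ B := by rw [hB]; nlinarith
      have h9 : ψ (φ j) ≤ 2 * B / lam := by
        rw [le_div_iff₀ hlam]
        nlinarith [hψnn (φ j)]
      rw [hψ (φ j)]
      exact EReal.coe_le_coe_iff.2 h9
    calc Ψ w ≤ Filter.liminf (fun j => Ψ (u (φ j))) atTop :=
          weak_lsc Ψ hΨnn hΨlsc hΨconv (fun j => u (φ j)) w
            (fun f => (hweak f).comp hφat)
      _ ≤ Filter.limsup (fun j => Ψ (u (φ j))) atTop := liminf_le_limsup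
      _ ≤ _ := limsup_le_of_le (by isBoundedDefault) hub
  have hΨwnt : Ψ w ≠ ⊤ := fun h => by
    rw [h] at hΨwle; exact (EReal.coe_ne_top _) (top_le_iff.1 hΨwle)
  have hΨwnb : Ψ w ≠ ⊥ := fun hb => by simpa [hb] using hΨnn w
  set ψw : ℝ := (Ψ w).toReal with hψwdef
  have hψw : Ψ w = ((ψw : ℝ) : EReal) := (EReal.coe_toReal hΨwnt hΨwnb).symm
  -- limsup ≤ Ψ w
  have hsup : Filter.limsup (fun j => Ψ (u (φ j))) atTop ≤ Ψ w := by
    have key : ∀ δ : ℝ, 0 < δ →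
        Filter.limsup (fun j => Ψ (u (φ j))) atTop ≤ ((ψw + δ / lam : ℝ) : EReal) := by
      intro δ hδ
      set r : ℕ → ℝ := fun j => ψw + (εs (φ j) * (C + ‖w‖) + δ) / lams (φ j) with hr
      have hrlim : Tendsto r atTop (𝓝 (ψw + δ / lam)) := by
        have h1 : Tendsto (fun j => εs (φ j) * (C + ‖w‖) + δ) atTop (𝓝 (0 * (C + ‖w‖) + δ)) :=
          ((hεlim.comp hφat).mul_const _).add_const δ
        have h2 := h1.div (hllim.comp hφat) (ne_of_gt hlam)
        rw [zero_mul, zero_add] at h2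
        exact tendsto_const_nhds.add h2
      have hub : ∀ᶠ j in atTop, Ψ (u (φ j)) ≤ ((r j : ℝ) : EReal) := by
        filter_upwards [hev w δ hδ, hlams2] with j h1 h2
        have h3 := hPSr (φ j) w hΨwnt
        rw [← hψwdef] at h3
        have h4 : fderiv ℝ Φ w (w - w) = 0 := by rw [sub_self, map_zero]
        rw [h4] at h1
        have h5 : ‖w - u (φ j)‖ ≤ C + ‖w‖ := by
          calc ‖w - u (φ j)‖ ≤ ‖w‖ + ‖u (φ j)‖ := norm_sub_le _ _
            _ ≤ C + ‖w‖ := by linarith [hC (φ j)]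
        have hl0' := hl0 (φ j)
        have h6 : lams (φ j) * ψ (φ j) ≤ lams (φ j) * ψw + εs (φ j) * (C + ‖w‖) + δ := by
          have h7 : εs (φ j) * ‖w - u (φ j)‖ ≤ εs (φ j) * (C + ‖w‖) :=
            mul_le_mul_of_nonneg_left h5 (hε0 (φ j)).le
          nlinarith
        have h9 : ψ (φ j) ≤ r j := by
          rw [hr]
          have h10 : ψ (φ j) - ψw ≤ (εs (φ j) * (C + ‖w‖) + δ) / lams (φ j) := by
            rw [le_div_iff₀ hl0']
            nlinarith
          simp only []
          linarith
        rw [hψ (φ j)]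
        exact EReal.coe_le_coe_iff.2 h9
      calc Filter.limsup (fun j => Ψ (u (φ j))) atTop
          ≤ Filter.limsup (fun j => ((r j : ℝ) : EReal)) atTop := limsup_le_limsup hub
        _ = ((ψw + δ / lam : ℝ) : EReal) := (EReal.tendsto_coe.2 hrlim).limsup_eq
    by_contra hcon
    push_neg at hcon
    rw [hψw] at hcon
    obtain ⟨y, hy1, hy2⟩ := EReal.exists_between_coe_real hcon
    have hyψ : ψw < y := EReal.coe_lt_coe_iff.1 hy1
    have hδ : 0 < (y - ψw) * lam / 2 := by nlinarith
    have hkey := key _ hδ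
    have hlt : ψw + (y - ψw) * lam / 2 / lam < y := by
      have heqd : (y - ψw) * lam / 2 / lam = (y - ψw) / 2 := by
        field_simp
      rw [heqd]; linarith
    have hfin : Filter.limsup (fun j => Ψ (u (φ j))) atTop < ((y:ℝ) : EReal) :=
      lt_of_le_of_lt hkey (EReal.coe_lt_coe_iff.2 hlt)
    exact absurd hy2 (not_lt.2 (le_of_lt hfin))
  have hinf : Ψ w ≤ Filter.liminf (fun j => Ψ (u (φ j))) atTop :=
    weak_lsc Ψ hΨnn hΨlsc hΨconv (fun j => u (φ j)) w (fun f => (hweak f).comp hφat)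
  have heq1 : Filter.liminf (fun j => Ψ (u (φ j))) atTop = Ψ w :=
    le_antisymm (le_trans liminf_le_limsup hsup) hinf
  have heq2 : Filter.limsup (fun j => Ψ (u (φ j))) atTop = Ψ w :=
    le_antisymm hsup (le_trans hinf liminf_le_limsup)
  have hΨtend : Tendsto (fun j => Ψ (u (φ j))) atTop (𝓝 (Ψ w)) :=
    tendsto_of_liminf_eq_limsup heq1 heq2
  exact ⟨hΨwnt, φ, hφmono, hΨtend,
    hΨ3 (fun j => u (φ j)) w (fun j => hunt (φ j)) hΨwnt
      (fun f => (hweak f).comp hφat) hΨtend⟩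

/-- The functional `I_λ = λΨ − Φ`, with extended-real values. -/
def ILam (Ψ : X → EReal) (Φ : X → ℝ) (lam : ℝ) (u : X) : EReal :=
  (lam : EReal) * Ψ u - ((Φ u : ℝ) : EReal)

/-- `u` is a critical point of `I_λ = λΨ − Φ` in the sense of Szulkin. -/
def IsCriticalPoint (Ψ : X → EReal) (Φ : X → ℝ) (lam : ℝ) (u : X) : Prop :=
  ∀ v : X, 0 ≤ (lam : EReal) * (Ψ v - Ψ u) - ((fderiv ℝ Φ u (v - u) : ℝ) : EReal)

theorem weak_to_strong_convergence_of_approximate_critical_sequences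
    [CompleteSpace X]
    (Ψ : X → EReal) (Φ : X → ℝ)
    -- (Ψ1)
    (hΨ0 : Ψ 0 = 0)
    (hΨnn : ∀ u : X, 0 ≤ Ψ u)
    (hΨlsc : LowerSemicontinuous Ψ)
    (hΨconv : ∀ u v : X, ∀ a b : ℝ, 0 ≤ a → 0 ≤ b → a + b = 1 →
      Ψ (a • u + b • v) ≤ (a : EReal) * Ψ u + (b : EReal) * Ψ v)
    -- (Ψ3)
    (hΨ3 : ∀ (u : ℕ → X) (w : X), (∀ j, Ψ (u j) ≠ ⊤) → Ψ w ≠ ⊤ →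
      (∀ f : X →L[ℝ] ℝ, Tendsto (fun j => f (u j)) atTop (𝓝 (f w))) →
      Tendsto (fun j => Ψ (u j)) atTop (𝓝 (Ψ w)) →
      Tendsto (fun j => ‖u j - w‖) atTop (𝓝 0))
    -- (Φ1)
    (hΦ : ContDiff ℝ 1 Φ)
    -- (Φ2)
    (hΦ2 : ∀ u : ℕ → X, IsBounded (range u) →
      ∃ (φ : ℕ → ℕ) (w : X), StrictMono φ ∧
        (∀ f : X →L[ℝ] ℝ, Tendsto (fun j => f (u (φ j))) atTop (𝓝 (f w))) ∧
        ∀ v : X, ((fderiv ℝ Φ w (v - w) : ℝ) : EReal) ≤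
          Filter.liminf
            (fun j => ((fderiv ℝ Φ (u (φ j)) (v - u (φ j)) : ℝ) : EReal)) atTop) :
    -- main conclusion
    (∀ (εs lams : ℕ → ℝ) (u : ℕ → X) (lam : ℝ) (w : X),
      (∀ j, 0 < εs j) → Tendsto εs atTop (𝓝 0) →
      (∀ j, 0 < lams j) → 0 < lam → Tendsto lams atTop (𝓝 lam) →
      (∀ f : X →L[ℝ] ℝ, Tendsto (fun j => f (u j)) atTop (𝓝 (f w))) →
      (∀ (j : ℕ) (v : X),
        ((-(εs j * ‖v - u j‖) : ℝ) : EReal) ≤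
          (lams j : EReal) * (Ψ v - Ψ (u j)) -
            ((fderiv ℝ Φ (u j) (v - u j) : ℝ) : EReal)) →
      Tendsto (fun j => ‖u j - w‖) atTop (𝓝 0) ∧
      IsCriticalPoint Ψ Φ lam w ∧
      ILam Ψ Φ lam w ≠ ⊤ ∧ ILam Ψ Φ lam w ≠ ⊥ ∧
      Tendsto (fun j => ILam Ψ Φ (lams j) (u j)) atTop (𝓝 (ILam Ψ Φ lam w))) ∧
    -- in particular: every bounded Palais–Smale sequence for `I_λ` at a level `c`
    -- admits a strongly convergent subsequence
    (∀ (lam c : ℝ) (u : ℕ → X), 0 < lam → IsBounded (range u) →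
      Tendsto (fun j => ILam Ψ Φ lam (u j)) atTop (𝓝 ((c : ℝ) : EReal)) →
      (∃ εs : ℕ → ℝ, (∀ j, 0 < εs j) ∧ Tendsto εs atTop (𝓝 0) ∧
        ∀ (j : ℕ) (v : X),
          ((-(εs j * ‖v - u j‖) : ℝ) : EReal) ≤
            (lam : EReal) * (Ψ v - Ψ (u j)) -
              ((fderiv ℝ Φ (u j) (v - u j) : ℝ) : EReal)) →
      ∃ (φ : ℕ → ℕ) (w : X), StrictMono φ ∧
        Tendsto (fun j => ‖u (φ j) - w‖) atTop (𝓝 0)) := by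
  have part1 : ∀ (εs lams : ℕ → ℝ) (u : ℕ → X) (lam : ℝ) (w : X),
      (∀ j, 0 < εs j) → Tendsto εs atTop (𝓝 0) →
      (∀ j, 0 < lams j) → 0 < lam → Tendsto lams atTop (𝓝 lam) →
      (∀ f : X →L[ℝ] ℝ, Tendsto (fun j => f (u j)) atTop (𝓝 (f w))) →
      (∀ (j : ℕ) (v : X),
        ((-(εs j * ‖v - u j‖) : ℝ) : EReal) ≤
          (lams j : EReal) * (Ψ v - Ψ (u j)) -
            ((fderiv ℝ Φ (u j) (v - u j) : ℝ) : EReal)) →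
      Tendsto (fun j => ‖u j - w‖) atTop (𝓝 0) ∧
      IsCriticalPoint Ψ Φ lam w ∧
      ILam Ψ Φ lam w ≠ ⊤ ∧ ILam Ψ Φ lam w ≠ ⊥ ∧
      Tendsto (fun j => ILam Ψ Φ (lams j) (u j)) atTop (𝓝 (ILam Ψ Φ lam w)) := by
    intro εs lams u lam w hε0 hεlim hl0 hlam hllim hweak hPS
    obtain ⟨hΨwnt, -⟩ := aux_main Ψ Φ hΨ0 hΨnn hΨlsc hΨconv hΨ3 hΦ2
      εs lams u lam w hε0 hεlim hl0 hlam hllim hweak hPS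
    have hΨwnb : Ψ w ≠ ⊥ := fun hb => by simpa [hb] using hΨnn w
    have hψw : Ψ w = (((Ψ w).toReal : ℝ) : EReal) := (EReal.coe_toReal hΨwnt hΨwnb).symm
    -- strong convergence of the full sequence
    have hstrong : Tendsto (fun j => ‖u j - w‖) atTop (𝓝 0) := by
      apply Filter.tendsto_of_subseq_tendsto
      intro ns hns
      obtain ⟨-, φ, -, -, hstr⟩ := aux_main Ψ Φ hΨ0 hΨnn hΨlsc hΨconv hΨ3 hΦ2
        (fun j => εs (ns j)) (fun j => lams (ns j)) (fun j => u (ns j)) lam w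
        (fun j => hε0 _) (hεlim.comp hns) (fun j => hl0 _) hlam (hllim.comp hns)
        (fun f => (hweak f).comp hns) (fun j v => hPS (ns j) v)
      exact ⟨φ, hstr⟩
    -- convergence of Ψ along the full sequence
    have hΨtend : Tendsto (fun j => Ψ (u j)) atTop (𝓝 (Ψ w)) := by
      apply Filter.tendsto_of_subseq_tendsto
      intro ns hns
      obtain ⟨-, φ, -, hΨt, -⟩ := aux_main Ψ Φ hΨ0 hΨnn hΨlsc hΨconv hΨ3 hΦ2
        (fun j => εs (ns j)) (fun j => lams (ns j)) (fun j => u (ns j)) lam w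
        (fun j => hε0 _) (hεlim.comp hns) (fun j => hl0 _) hlam (hllim.comp hns)
        (fun f => (hweak f).comp hns) (fun j v => hPS (ns j) v)
      exact ⟨φ, hΨt⟩
    have hut : Tendsto u atTop (𝓝 w) := tendsto_iff_norm_sub_tendsto_zero.2 hstrong
    -- finiteness of Ψ (u j), real versions
    have hunt : ∀ j, Ψ (u j) ≠ ⊤ := by
      intro j htop
      have h := hPS j 0
      have h2 : ((lams j : EReal)) * ((0:EReal) - ⊤) -
          ((fderiv ℝ Φ (u j) ((0:X) - u j) : ℝ) : EReal) = ⊥ := by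
        rw [zero_sub, show (-(⊤:EReal)) = ⊥ from rfl, EReal.coe_mul_bot_of_pos (hl0 j)]
        simp
      rw [hΨ0, htop, h2, le_bot_iff] at h
      exact EReal.coe_ne_bot _ h
    have hunb : ∀ j, Ψ (u j) ≠ ⊥ := fun j hb => by simpa [hb] using hΨnn (u j)
    have hψ : ∀ j, Ψ (u j) = (((Ψ (u j)).toReal : ℝ) : EReal) := fun j =>
      (EReal.coe_toReal (hunt j) (hunb j)).symm
    have hψtendR : Tendsto (fun j => (Ψ (u j)).toReal) atTop (𝓝 (Ψ w).toReal) :=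
      (EReal.tendsto_toReal hΨwnt hΨwnb).comp hΨtend
    -- criticality
    have hcrit : IsCriticalPoint Ψ Φ lam w := by
      intro v
      by_cases hv : Ψ v = ⊤
      · rw [hv, hψw, EReal.top_sub_coe, EReal.coe_mul_top_of_pos hlam, EReal.top_sub_coe]
        exact le_top
      · have hvb : Ψ v ≠ ⊥ := fun hb => by simpa [hb] using hΨnn v
        rw [← EReal.coe_toReal hv hvb, hψw, ← EReal.coe_sub, ← EReal.coe_mul, ← EReal.coe_sub]
        apply EReal.coe_nonneg.2
        have hPSr : ∀ j, -(εs j * ‖v - u j‖) ≤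
            lams j * ((Ψ v).toReal - (Ψ (u j)).toReal) - fderiv ℝ Φ (u j) (v - u j) := by
          intro j
          have h := hPS j v
          rw [hψ j, ← EReal.coe_toReal hv hvb, ← EReal.coe_sub, ← EReal.coe_mul,
            ← EReal.coe_sub, EReal.coe_le_coe_iff] at h
          exact h
        have hdc : Continuous fun x : X => fderiv ℝ Φ x (v - x) :=
          (hΦ.continuous_fderiv one_ne_zero).clm_apply (continuous_const.sub continuous_id)
        have hdtend : Tendsto (fun j => fderiv ℝ Φ (u j) (v - u j)) atTop
            (𝓝 (fderiv ℝ Φ w (v - w))) := (hdc.tendsto w).comp hut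
        have halim : Tendsto
            (fun j => lams j * ((Ψ v).toReal - (Ψ (u j)).toReal) - fderiv ℝ Φ (u j) (v - u j))
            atTop (𝓝 (lam * ((Ψ v).toReal - (Ψ w).toReal) - fderiv ℝ Φ w (v - w))) :=
          (hllim.mul (tendsto_const_nhds.sub hψtendR)).sub hdtend
        have hblim : Tendsto (fun j => -(εs j * ‖v - u j‖)) atTop (𝓝 0) := by
          have h1 : Tendsto (fun j => ‖v - u j‖) atTop (𝓝 ‖v - w‖) :=
            (tendsto_const_nhds.sub hut).norm
          have h2 := (hεlim.mul h1).neg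
          simpa using h2
        exact le_of_tendsto_of_tendsto' hblim halim hPSr
    have hIw : ILam Ψ Φ lam w = ((lam * (Ψ w).toReal - Φ w : ℝ) : EReal) := by
      rw [ILam, hψw, ← EReal.coe_mul, ← EReal.coe_sub]
      simp
    refine ⟨hstrong, hcrit, by rw [hIw]; exact EReal.coe_ne_top _,
      by rw [hIw]; exact EReal.coe_ne_bot _, ?_⟩
    have hIj : ∀ j, ILam Ψ Φ (lams j) (u j) =
        ((lams j * (Ψ (u j)).toReal - Φ (u j) : ℝ) : EReal) := fun j => by
      rw [ILam, hψ j, ← EReal.coe_mul, ← EReal.coe_sub]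
      simp
    rw [hIw]
    simp only [hIj]
    apply EReal.tendsto_coe.2
    exact (hllim.mul hψtendR).sub ((hΦ.continuous.tendsto w).comp hut)
  refine ⟨part1, ?_⟩
  rintro lam c u hlam hbdd hIlim ⟨εs, hε0, hεlim, hPS⟩
  obtain ⟨φ, w, hφm, hweak, -⟩ := hΦ2 u hbdd
  obtain ⟨hstr, -⟩ := part1 (fun j => εs (φ j)) (fun _ => lam) (fun j => u (φ j)) lam w
    (fun j => hε0 _) (hεlim.comp hφm.tendsto_atTop) (fun _ => hlam) hlam tendsto_const_nhds
    hweak (fun j v => hPS (φ j) v)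
  exact ⟨φ, w, hφm, hstr⟩


end
end

section
/- Suppose (Ψ1), (Ψ3), (Φ1), (Φ2) hold and that for all 0 < a ≤ b and c ∈ ℝ the set K^c_{[a,b]} := {u ∈ X : u is a critical point of I_λ with I_λ(u) ≤ c for some λ ∈ [a,b]} is bounded in X. Then for every 0 < a ≤ b and every c ∈ ℝ the set K^c_{[a,b]} is compact. -/
open Set Filter Metric Bornology Topology

noncomputable section

variable {X : Type*} [NormedAddCommGroup X] [NormedSpace ℝ X]

/-- The set `K^c_{[a,b]}` of critical points of `I_λ`, `λ ∈ [a,b]`, with `I_λ ≤ c`. -/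
def critSet (Ψ : X → EReal) (Φ : X → ℝ) (a b c : ℝ) : Set X :=
  {u : X | ∃ lam ∈ Icc a b, IsCriticalPoint Ψ Φ lam u ∧ ILam Ψ Φ lam u ≤ (c : EReal)}

/-- Mazur-type lemma: a closed convex set is weakly sequentially closed. -/
lemma weakSeqClosed_of_convex {C : Set X} (hC : Convex ℝ C) (hCl : IsClosed C)
    {v : ℕ → X} {w : X} (hv : ∀ n, v n ∈ C)
    (hw : ∀ f : X →L[ℝ] ℝ, Tendsto (fun n => f (v n)) atTop (𝓝 (f w))) : w ∈ C := by
  by_contra h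
  obtain ⟨f, t, hft, htf⟩ := geometric_hahn_banach_closed_point hC hCl h
  have hev : ∀ᶠ n in atTop, t < f (v n) := (hw f).eventually (eventually_gt_nhds htf)
  obtain ⟨n, hn⟩ := hev.exists
  exact absurd (hft (v n) (hv n)) (not_lt.2 hn.le)

theorem critSet_compact
    [CompleteSpace X]
    (Ψ : X → EReal) (Φ : X → ℝ)
    -- (Ψ1)
    (hΨ0 : Ψ 0 = 0)
    (hΨnn : ∀ u : X, 0 ≤ Ψ u)
    (hΨlsc : LowerSemicontinuous Ψ)
    (hΨconv : ∀ u v : X, ∀ a b : ℝ, 0 ≤ a → 0 ≤ b → a + b = 1 →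
      Ψ (a • u + b • v) ≤ (a : EReal) * Ψ u + (b : EReal) * Ψ v)
    -- (Ψ3)
    (hΨ3 : ∀ (u : ℕ → X) (w : X), (∀ j, Ψ (u j) ≠ ⊤) → Ψ w ≠ ⊤ →
      (∀ f : X →L[ℝ] ℝ, Tendsto (fun j => f (u j)) atTop (𝓝 (f w))) →
      Tendsto (fun j => Ψ (u j)) atTop (𝓝 (Ψ w)) →
      Tendsto (fun j => ‖u j - w‖) atTop (𝓝 0))
    -- (Φ1)
    (hΦ : ContDiff ℝ 1 Φ)
    -- (Φ2)
    (hΦ2 : ∀ u : ℕ → X, IsBounded (range u) →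
      ∃ (φ : ℕ → ℕ) (w : X), StrictMono φ ∧
        (∀ f : X →L[ℝ] ℝ, Tendsto (fun j => f (u (φ j))) atTop (𝓝 (f w))) ∧
        ∀ v : X, ((fderiv ℝ Φ w (v - w) : ℝ) : EReal) ≤
          Filter.liminf
            (fun j => ((fderiv ℝ Φ (u (φ j)) (v - u (φ j)) : ℝ) : EReal)) atTop)
    -- (IB)
    (hIB : ∀ a b c : ℝ, 0 < a → a ≤ b → IsBounded (critSet Ψ Φ a b c)) :
    ∀ a b c : ℝ, 0 < a → a ≤ b → IsCompact (critSet Ψ Φ a b c) := by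
  intro a b c ha hab
  -- weak sequential closedness of sublevel sets of Ψ
  have hsub : ∀ r : ℝ, 0 ≤ r → ∀ (v : ℕ → X) (w : X), (∀ n, Ψ (v n) ≤ (r : EReal)) →
      (∀ f : X →L[ℝ] ℝ, Tendsto (fun n => f (v n)) atTop (𝓝 (f w))) →
      Ψ w ≤ (r : EReal) := by
    intro r _hr v w hv hw
    have hC : Convex ℝ {x : X | Ψ x ≤ (r : EReal)} := by
      intro x hx y hy s t hs ht hst
      refine le_trans (hΨconv x y s t hs ht hst) ?_
      calc (s : EReal) * Ψ x + (t : EReal) * Ψ y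
          ≤ (s : EReal) * (r : EReal) + (t : EReal) * (r : EReal) := by
            gcongr
            · exact hx
            · exact hy
        _ = ((s * r + t * r : ℝ) : EReal) := by
            rw [EReal.coe_add, EReal.coe_mul, EReal.coe_mul]
        _ = (r : EReal) := by rw [← add_mul, hst, one_mul]
    have hCl : IsClosed {x : X | Ψ x ≤ (r : EReal)} := by
      rw [← isOpen_compl_iff, isOpen_iff_mem_nhds]
      intro x hx
      have hx' : (r : EReal) < Ψ x := not_le.1 hx
      filter_upwards [hΨlsc x (r : EReal) hx'] with y hy
      exact not_le.2 hy
    exact weakSeqClosed_of_convex hC hCl hv hw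
  apply IsSeqCompact.isCompact
  intro u hu
  choose lam hlam hcrit hIle using hu
  obtain ⟨lam0, hlam0, φ₁, hm1, ht1⟩ := (isCompact_Icc (a := a) (b := b)).tendsto_subseq hlam
  have hbdd : IsBounded (range (u ∘ φ₁)) := by
    refine (hIB a b c ha hab).subset ?_
    rintro _ ⟨n, rfl⟩
    exact ⟨lam (φ₁ n), hlam _, hcrit _, hIle _⟩
  obtain ⟨φ₂, w, hm2, hweak, hliminf⟩ := hΦ2 (u ∘ φ₁) hbdd
  set ψ : ℕ → ℕ := φ₁ ∘ φ₂ with hψ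
  set v : ℕ → X := fun j => u (ψ j) with hv
  set μ : ℕ → ℝ := fun j => lam (ψ j) with hμ
  have hμa : ∀ j, a ≤ μ j := fun j => (hlam (ψ j)).1
  have hμpos : ∀ j, 0 < μ j := fun j => lt_of_lt_of_le ha (hμa j)
  have hμtend : Tendsto μ atTop (𝓝 lam0) := ht1.comp hm2.tendsto_atTop
  have hlam0a : a ≤ lam0 := hlam0.1
  have hlam0pos : 0 < lam0 := lt_of_lt_of_le ha hlam0a
  have hcritv : ∀ j, IsCriticalPoint Ψ Φ (μ j) (v j) := fun j => hcrit (ψ j)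
  -- each Ψ (v j) is finite
  have hΨvtop : ∀ j, Ψ (v j) ≠ ⊤ := by
    intro j htop
    have h := hcritv j 0
    rw [hΨ0, htop, EReal.sub_top, EReal.mul_bot_of_pos (by exact_mod_cast hμpos j)] at h
    rw [show (⊥ : EReal) - ((fderiv ℝ Φ (v j) (0 - v j) : ℝ) : EReal) = ⊥ from
      EReal.bot_sub _] at h
    simp at h
  have hΨvbot : ∀ j, Ψ (v j) ≠ ⊥ := fun j => ne_of_gt (lt_of_lt_of_le EReal.bot_lt_zero (hΨnn _))
  set p : ℕ → ℝ := fun j => (Ψ (v j)).toReal with hpdef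
  have hp : ∀ j, Ψ (v j) = ((p j : ℝ) : EReal) := fun j =>
    (EReal.coe_toReal (hΨvtop j) (hΨvbot j)).symm
  have hpnn : ∀ j, 0 ≤ p j := by
    intro j
    have := hΨnn (v j); rw [hp j] at this; exact_mod_cast this
  -- real form of the criticality inequality
  have key : ∀ (j : ℕ) (x : X) (s : ℝ), Ψ x = (s : EReal) →
      fderiv ℝ Φ (v j) (x - v j) ≤ μ j * (s - p j) := by
    intro j x s hs
    have h := hcritv j x
    rw [hs, hp j] at h
    have h' : ((0 : ℝ) : EReal) ≤
        ((μ j * (s - p j) - fderiv ℝ Φ (v j) (x - v j) : ℝ) : EReal) := by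
      rw [EReal.coe_sub, EReal.coe_mul, EReal.coe_sub]
      exact_mod_cast h
    rw [EReal.coe_le_coe_iff] at h'
    linarith
  -- eventual lower bounds on the derivative terms
  have hev : ∀ (x : X) (t : ℝ), t < fderiv ℝ Φ w (x - w) →
      ∀ᶠ j in atTop, t < fderiv ℝ Φ (v j) (x - v j) := by
    intro x t ht
    have h1 : ((t : ℝ) : EReal) <
        Filter.liminf (fun j => ((fderiv ℝ Φ (v j) (x - v j) : ℝ) : EReal)) atTop :=
      lt_of_lt_of_le (by exact_mod_cast ht) (hliminf x)
    have h2 := eventually_lt_of_lt_liminf h1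
    filter_upwards [h2] with j hj
    exact_mod_cast hj
  have hw0 : fderiv ℝ Φ w (w - w) = 0 := by rw [sub_self, map_zero]
  -- a uniform bound on p, giving Ψ w < ∞
  have hΨwtop : Ψ w ≤ ((max ((1 - fderiv ℝ Φ w (0 - w)) / a) 0 : ℝ) : EReal) := by
    set R : ℝ := max ((1 - fderiv ℝ Φ w (0 - w)) / a) 0 with hR
    have hevb : ∀ᶠ j in atTop, Ψ (v j) ≤ ((R : ℝ) : EReal) := by
      filter_upwards [hev 0 (fderiv ℝ Φ w (0 - w) - 1) (by linarith)] with j hj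
      have hk := key j 0 0 (by rw [hΨ0]; norm_cast)
      -- fderiv Φ (v j) (0 - v j) ≤ μ j * (0 - p j) = -(μ j * p j)
      have h1 : μ j * p j ≤ 1 - fderiv ℝ Φ w (0 - w) := by nlinarith
      have h2 : a * p j ≤ μ j * p j :=
        mul_le_mul_of_nonneg_right (hμa j) (hpnn j)
      have h3 : p j ≤ (1 - fderiv ℝ Φ w (0 - w)) / a := by
        rw [le_div_iff₀ ha]; nlinarith
      rw [hp j]
      exact_mod_cast h3.trans (le_max_left _ _)
    obtain ⟨N, hN⟩ := eventually_atTop.1 hevb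
    refine hsub R (le_max_right _ _) (fun n => v (n + N)) w (fun n => hN _ (Nat.le_add_left _ _))
      (fun f => (hweak f).comp (tendsto_add_atTop_nat N))
  have hΨwtop' : Ψ w ≠ ⊤ := ne_top_of_le_ne_top (EReal.coe_ne_top _) hΨwtop
  have hΨwbot : Ψ w ≠ ⊥ := ne_of_gt (lt_of_lt_of_le EReal.bot_lt_zero (hΨnn _))
  set q : ℝ := (Ψ w).toReal with hqdef
  have hq : Ψ w = ((q : ℝ) : EReal) := (EReal.coe_toReal hΨwtop' hΨwbot).symm
  -- upper bound: eventually p j ≤ q + ε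
  have hupper : ∀ ε : ℝ, 0 < ε → ∀ᶠ j in atTop, p j ≤ q + ε := by
    intro ε hε
    have h0 : -(ε * a) < fderiv ℝ Φ w (w - w) := by rw [hw0]; exact neg_lt_zero.2 (mul_pos hε ha)
    filter_upwards [hev w (-(ε * a)) h0] with j hj
    have hk := key j w q hq
    rcases le_or_gt (p j) q with h | h
    · linarith
    · -- q - p j < 0, μ j ≥ a
      have h1 : μ j * (q - p j) ≤ a * (q - p j) := by nlinarith [hμa j]
      have h2 : -(ε * a) < a * (q - p j) := by linarith
      nlinarith
  -- lower bound: eventually q - ε ≤ p j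
  have hlower : ∀ ε : ℝ, 0 < ε → ∀ᶠ j in atTop, q - ε ≤ p j := by
    intro ε hε
    by_contra hcon
    rw [not_eventually] at hcon
    have hcon' : ∃ᶠ j in atTop, p j < q - ε := by
      apply hcon.mono; intro j; exact not_le.1
    obtain ⟨σ, hσmono, hσ⟩ := extraction_of_frequently_atTop hcon'
    rcases lt_or_ge (q - ε) 0 with hneg | hpos
    · exact absurd (hσ 0) (not_lt.2 (le_trans hneg.le (hpnn _)))
    · have hΨwle : Ψ w ≤ ((q - ε : ℝ) : EReal) := by
        refine hsub (q - ε) hpos (fun n => v (σ n)) w ?_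
          (fun f => (hweak f).comp hσmono.tendsto_atTop)
        intro n
        rw [hp (σ n)]
        exact_mod_cast (hσ n).le
      rw [hq] at hΨwle
      have : q ≤ q - ε := by exact_mod_cast hΨwle
      linarith
  -- p converges to q
  have hptend : Tendsto p atTop (𝓝 q) := by
    rw [Metric.tendsto_atTop]
    intro ε hε
    obtain ⟨N, hN⟩ := eventually_atTop.1
      ((hupper (ε / 2) (by positivity)).and (hlower (ε / 2) (by positivity)))
    refine ⟨N, fun n hn => ?_⟩
    obtain ⟨h1, h2⟩ := hN n hn
    rw [Real.dist_eq, abs_lt]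
    constructor <;> linarith
  have hΨtend : Tendsto (fun j => Ψ (v j)) atTop (𝓝 (Ψ w)) := by
    rw [hq]
    have : Tendsto (fun j => ((p j : ℝ) : EReal)) atTop (𝓝 ((q : ℝ) : EReal)) :=
      (continuous_coe_real_ereal.tendsto q).comp hptend
    exact this.congr (fun j => (hp j).symm)
  have hnorm := hΨ3 v w hΨvtop hΨwtop' hweak hΨtend
  have hvtend : Tendsto v atTop (𝓝 w) := tendsto_iff_norm_sub_tendsto_zero.2 hnorm
  -- w is a critical point of I_{lam0}
  have hcritw : IsCriticalPoint Ψ Φ lam0 w := by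
    intro x
    rcases eq_top_or_lt_top (Ψ x) with hx | hx
    · rw [hx, hq, EReal.top_sub_coe, EReal.mul_top_of_pos (by exact_mod_cast hlam0pos)]
      rw [EReal.top_sub_coe]
      exact le_top
    · have hxbot : Ψ x ≠ ⊥ := ne_of_gt (lt_of_lt_of_le EReal.bot_lt_zero (hΨnn _))
      set s : ℝ := (Ψ x).toReal with hsdef
      have hs : Ψ x = ((s : ℝ) : EReal) := (EReal.coe_toReal hx.ne hxbot).symm
      -- limit of the real upper bounds
      have htmul : Tendsto (fun j => μ j * (s - p j)) atTop (𝓝 (lam0 * (s - q))) :=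
        hμtend.mul (tendsto_const_nhds.sub hptend)
      have htmulE : Tendsto (fun j => ((μ j * (s - p j) : ℝ) : EReal)) atTop
          (𝓝 ((lam0 * (s - q) : ℝ) : EReal)) :=
        (continuous_coe_real_ereal.tendsto _).comp htmul
      have hliminfle : ((fderiv ℝ Φ w (x - w) : ℝ) : EReal) ≤
          ((lam0 * (s - q) : ℝ) : EReal) := by
        refine le_trans (hliminf x) ?_
        rw [← htmulE.liminf_eq]
        refine liminf_le_liminf ?_
        filter_upwards with j
        exact_mod_cast key j x s hs
      have hreal : fderiv ℝ Φ w (x - w) ≤ lam0 * (s - q) := by exact_mod_cast hliminfle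
      rw [hs, hq]
      have : ((0 : ℝ) : EReal) ≤
          ((lam0 * (s - q) - fderiv ℝ Φ w (x - w) : ℝ) : EReal) := by
        exact_mod_cast sub_nonneg.2 hreal
      rw [EReal.coe_sub, EReal.coe_mul, EReal.coe_sub] at this
      exact_mod_cast this
  -- I_{lam0}(w) ≤ c
  have hIlamw : ILam Ψ Φ lam0 w ≤ (c : EReal) := by
    have hIlev : ∀ j, μ j * p j - Φ (v j) ≤ c := by
      intro j
      have h := hIle (ψ j)
      rw [show ILam Ψ Φ (μ j) (v j) = ((μ j * p j - Φ (v j) : ℝ) : EReal) by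
        rw [ILam, hp j, ← EReal.coe_mul, ← EReal.coe_sub]] at h
      exact_mod_cast h
    have hΦtend : Tendsto (fun j => Φ (v j)) atTop (𝓝 (Φ w)) :=
      (hΦ.continuous.tendsto w).comp hvtend
    have hrtend : Tendsto (fun j => μ j * p j - Φ (v j)) atTop (𝓝 (lam0 * q - Φ w)) :=
      (hμtend.mul hptend).sub hΦtend
    have hreal : lam0 * q - Φ w ≤ c := le_of_tendsto hrtend (Eventually.of_forall hIlev)
    rw [show ILam Ψ Φ lam0 w = ((lam0 * q - Φ w : ℝ) : EReal) by
      rw [ILam, hq, ← EReal.coe_mul, ← EReal.coe_sub]]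
    exact_mod_cast hreal
  exact ⟨w, ⟨lam0, hlam0, hcritw, hIlamw⟩, ψ, hm1.comp hm2, hvtend⟩

end
end

section
/- (Deformation Lemma.) Suppose (Ψ1) and (Φ1) hold. Fix λ > 0, let A ⊂ X be closed and bounded, and for c ∈ ℝ, σ > 0 set 𝒜 := A ∩ {c − 3σ ≤ I_λ ≤ c + 3σ}. Assume there exists δ₀ > 0 such that for each u ∈ 𝒜 there is v = v(u) ∈ X \ {u} with λ(Ψ(v) − Ψ(u)) − Φ'(u)(v − u) < −5δ₀‖v − u‖. Then for every set K ⊂ 𝒜 which is relatively compact in X, there exist open sets W, W̃ with cl(K) ⊂ W ⊂ cl(W) ⊂ W̃, a number s₀ > 0 and a continuous map η : [0,∞) × X → X such that: (i) ‖η(s,w) − w‖ ≤ s for all (s,w) ∈ [0,∞) × X, and η(s,w) = w for all s ≥ 0 whenever w ∉ W̃; (ii) I_λ(η(s,w)) ≤ I_λ(w) + δ₀ s for all (s,w) ∈ [0,s₀] × X; (iii) I_λ(η(s,w)) ≤ I_λ(w) − 2δ₀ s for all (s,w) ∈ [0,s₀] × W with I_λ(w) ≥ c − σ. -/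
open Set Filter Metric Bornology Topology

noncomputable section

variable {X : Type*} [NormedAddCommGroup X] [NormedSpace ℝ X]

lemma ereal_ne_bot_of_nonneg {x : EReal} (h : 0 ≤ x) : x ≠ ⊥ :=
  fun hb => by simp [hb] at h

lemma ereal_coe_toReal_of {x : EReal} (h : x ≠ ⊤) (h0 : 0 ≤ x) :
    ((x.toReal : ℝ) : EReal) = x := EReal.coe_toReal h (ereal_ne_bot_of_nonneg h0)

lemma ILam_eq_top {Ψ : X → EReal} {Φ : X → ℝ} {lam : ℝ} (hlam : 0 < lam) {u : X}
    (h : Ψ u = ⊤) : ILam Ψ Φ lam u = ⊤ := by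
  rw [ILam, h, EReal.coe_mul_top_of_pos (by exact_mod_cast hlam), EReal.top_sub_coe]

lemma ILam_eq_coe {Ψ : X → EReal} {Φ : X → ℝ} {lam : ℝ} (hΨnn : ∀ u : X, 0 ≤ Ψ u)
    {u : X} (h : Ψ u ≠ ⊤) :
    ILam Ψ Φ lam u = ((lam * (Ψ u).toReal - Φ u : ℝ) : EReal) := by
  rw [ILam]
  conv_lhs => rw [← ereal_coe_toReal_of h (hΨnn u)]
  rw [← EReal.coe_mul, ← EReal.coe_sub]

lemma psi_ne_top_of_ILam_le {Ψ : X → EReal} {Φ : X → ℝ} {lam : ℝ} (hlam : 0 < lam)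
    {u : X} {y : ℝ} (h : ILam Ψ Φ lam u ≤ (y : EReal)) : Ψ u ≠ ⊤ := by
  intro ht
  rw [ILam_eq_top hlam ht] at h
  simp at h

/-- Per-center construction of descent data. -/
lemma perBall (Ψ : X → EReal) (Φ : X → ℝ)
    (hΨnn : ∀ u : X, 0 ≤ Ψ u)
    (hΨlsc : LowerSemicontinuous Ψ)
    (hΦ : ContDiff ℝ 1 Φ)
    (lam : ℝ) (hlam : 0 < lam)
    (A : Set X)
    (c σ : ℝ) (hσ : 0 < σ)
    (δ₀ : ℝ) (hδ₀ : 0 < δ₀)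
    (hdesc : ∀ u ∈ A ∩ {w : X | ((c - 3 * σ : ℝ) : EReal) ≤ ILam Ψ Φ lam w ∧
        ILam Ψ Φ lam w ≤ ((c + 3 * σ : ℝ) : EReal)},
      ∃ v : X, v ≠ u ∧
        (lam : EReal) * (Ψ v - Ψ u) - ((fderiv ℝ Φ u (v - u) : ℝ) : EReal) <
          ((-(5 * δ₀ * ‖v - u‖) : ℝ) : EReal))
    (x : X) (hxA : x ∈ A) (hxI : ILam Ψ Φ lam x ≤ ((c + 3 * σ : ℝ) : EReal)) :
    ∃ (v : X) (Rr r : ℝ), 0 < r ∧ 0 < Rr ∧ r ≤ Rr ∧ Ψ v ≠ ⊤ ∧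
      (∀ w ∈ closedBall x r, ‖v - w‖ ≤ Rr) ∧
      (∀ z ∈ closedBall x r, ‖fderiv ℝ Φ z - fderiv ℝ Φ x‖ ≤ δ₀ / 8) ∧
      (∀ w ∈ closedBall x r, Ψ w ≠ ⊤ →
        lam * ((Ψ v).toReal - (Ψ w).toReal) - fderiv ℝ Φ w (v - w) ≤ 3 / 4 * δ₀ * Rr) ∧
      (∀ w ∈ closedBall x r, Ψ w ≠ ⊤ → ((c - σ : ℝ) : EReal) ≤ ILam Ψ Φ lam w →
        lam * ((Ψ v).toReal - (Ψ w).toReal) - fderiv ℝ Φ w (v - w) ≤ -(3 * δ₀ * Rr)) := by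
  have hψxt : Ψ x ≠ ⊤ := psi_ne_top_of_ILam_le hlam hxI
  set ψx := (Ψ x).toReal with hψx
  have hψxc : ((ψx : ℝ) : EReal) = Ψ x := ereal_coe_toReal_of hψxt (hΨnn x)
  have hcontent : Continuous (fderiv ℝ Φ) := hΦ.continuous_fderiv (by norm_num)
  by_cases hcase : ((c - 2 * σ : ℝ) : EReal) ≤ ILam Ψ Φ lam x
  · -- high case: x ∈ 𝒜
    obtain ⟨v, hvne, hvdesc⟩ := hdesc x ⟨hxA, le_trans (by exact_mod_cast (by linarith : (c - 3*σ:ℝ) ≤ c - 2*σ)) hcase, hxI⟩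
    have hψvt : Ψ v ≠ ⊤ := by
      intro ht
      rw [ht] at hvdesc
      rw [← hψxc] at hvdesc
      rw [EReal.top_sub_coe, EReal.coe_mul_top_of_pos (by exact_mod_cast hlam),
        EReal.top_sub_coe] at hvdesc
      simp at hvdesc
    set ψv := (Ψ v).toReal with hψv
    have hψvc : ((ψv : ℝ) : EReal) = Ψ v := ereal_coe_toReal_of hψvt (hΨnn v)
    set ρ := ‖v - x‖ with hρ
    have hρpos : 0 < ρ := by
      rw [hρ, norm_pos_iff, sub_ne_zero]; exact hvne
    have hD : lam * (ψv - ψx) - fderiv ℝ Φ x (v - x) < -(5 * δ₀ * ρ) := by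
      rw [← hψvc, ← hψxc, ← EReal.coe_sub, ← EReal.coe_mul] at hvdesc
      rw [← EReal.coe_sub] at hvdesc
      exact_mod_cast hvdesc
    -- choose radius
    have E1 : ∀ᶠ w in 𝓝 x, ((ψx - δ₀ * ρ / (4 * lam) : ℝ) : EReal) < Ψ w := by
      apply hΨlsc x
      rw [← hψxc]
      exact_mod_cast sub_lt_self ψx (by positivity)
    have E2 : ∀ᶠ z in 𝓝 x, ‖fderiv ℝ Φ z - fderiv ℝ Φ x‖ < δ₀ / 8 := by
      have hb := hcontent.continuousAt (x := x)
        (Metric.ball_mem_nhds (fderiv ℝ Φ x) (by positivity : (0:ℝ) < δ₀/8))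
      filter_upwards [hb] with z hz
      rwa [mem_preimage, mem_ball_iff_norm] at hz
    obtain ⟨r', hr'pos, hr'⟩ := Metric.eventually_nhds_iff.1 (E1.and E2)
    set M := ‖fderiv ℝ Φ x‖ with hM
    have hMnn : 0 ≤ M := norm_nonneg _
    set r := min (r'/2) (min (ρ/16) (δ₀*ρ/(2*(M+5*δ₀)))) with hrdef
    have hrpos : 0 < r := by
      apply lt_min (by positivity) (lt_min (by positivity) (by positivity))
    have hr16 : r ≤ ρ/16 := le_trans (min_le_right _ _) (min_le_left _ _)
    have hrM : r ≤ δ₀*ρ/(2*(M+5*δ₀)) := le_trans (min_le_right _ _) (min_le_right _ _)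
    have hball : ∀ w ∈ closedBall x r, dist w x < r' := by
      intro w hw
      have := mem_closedBall.1 hw
      have h2 : r < r' := lt_of_le_of_lt (min_le_left _ _) (by linarith)
      linarith
    have key_est : ∀ w ∈ closedBall x r, Ψ w ≠ ⊤ →
        lam * (ψv - (Ψ w).toReal) - fderiv ℝ Φ w (v - w) ≤ -(4*δ₀*ρ) := by
      intro w hw hwt
      set ψw := (Ψ w).toReal with hψw
      have hψwc : ((ψw : ℝ) : EReal) = Ψ w := ereal_coe_toReal_of hwt (hΨnn w)
      have h1 : ψx - δ₀ * ρ / (4 * lam) < ψw := by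
        have h := (hr' (hball w hw)).1
        rw [← hψwc] at h
        exact_mod_cast h
      have h2 : ‖fderiv ℝ Φ w - fderiv ℝ Φ x‖ ≤ δ₀/8 := ((hr' (hball w hw)).2).le
      have hfw : ‖fderiv ℝ Φ w‖ ≤ M + δ₀/8 := by
        calc ‖fderiv ℝ Φ w‖ = ‖fderiv ℝ Φ x + (fderiv ℝ Φ w - fderiv ℝ Φ x)‖ := by
              congr 1; abel
          _ ≤ M + δ₀/8 := le_trans (norm_add_le _ _) (by rw [← hM]; linarith)
      have hxw : ‖x - w‖ ≤ r := by rw [← dist_eq_norm, dist_comm]; exact mem_closedBall.1 hw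
      have hid : fderiv ℝ Φ w (v - w) = fderiv ℝ Φ w (v - x) + fderiv ℝ Φ w (x - w) := by
        rw [← map_add]; congr 1; abel
      have ha1 : |(fderiv ℝ Φ w - fderiv ℝ Φ x) (v - x)| ≤ δ₀/8 * ρ := by
        rw [← Real.norm_eq_abs]
        calc ‖(fderiv ℝ Φ w - fderiv ℝ Φ x) (v - x)‖
            ≤ ‖fderiv ℝ Φ w - fderiv ℝ Φ x‖ * ‖v - x‖ := ContinuousLinearMap.le_opNorm _ _
          _ ≤ δ₀/8 * ρ := by
              rw [← hρ]
              exact mul_le_mul_of_nonneg_right h2 (by positivity)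
      have ha2 : |fderiv ℝ Φ w (x - w)| ≤ (M + δ₀/8) * r := by
        rw [← Real.norm_eq_abs]
        calc ‖fderiv ℝ Φ w (x - w)‖ ≤ ‖fderiv ℝ Φ w‖ * ‖x - w‖ :=
              ContinuousLinearMap.le_opNorm _ _
          _ ≤ (M + δ₀/8) * r := mul_le_mul hfw hxw (norm_nonneg _) (by positivity)
      have hfwvx : fderiv ℝ Φ w (v - x) =
          fderiv ℝ Φ x (v - x) + (fderiv ℝ Φ w - fderiv ℝ Φ x) (v - x) := by
        rw [ContinuousLinearMap.sub_apply]; ring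
      have hMr : (M + δ₀/8) * r ≤ δ₀ * ρ / 2 := by
        have h5 : (M + δ₀/8) ≤ M + 5*δ₀ := by linarith
        calc (M + δ₀/8) * r ≤ (M + 5*δ₀) * (δ₀*ρ/(2*(M+5*δ₀))) :=
              mul_le_mul h5 hrM hrpos.le (by linarith)
          _ = δ₀ * ρ / 2 := by field_simp
      have hlε : lam * (ψx - ψw) ≤ δ₀ * ρ / 4 := by
        have h3 : ψx - ψw ≤ δ₀ * ρ / (4 * lam) := by linarith
        calc lam * (ψx - ψw) ≤ lam * (δ₀ * ρ / (4*lam)) :=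
              mul_le_mul_of_nonneg_left h3 hlam.le
          _ = δ₀ * ρ / 4 := by field_simp
      have habs1 := abs_le.1 ha1
      have habs2 := abs_le.1 ha2
      rw [hid, hfwvx]
      linarith [hD]
    refine ⟨v, ρ + r, r, hrpos, by linarith, by linarith, hψvt, ?_, ?_, ?_, ?_⟩
    · intro w hw
      have h1 : ‖x - w‖ ≤ r := by
        rw [← dist_eq_norm, dist_comm]; exact mem_closedBall.1 hw
      calc ‖v - w‖ = ‖(v - x) + (x - w)‖ := by abel_nf
        _ ≤ ‖v - x‖ + ‖x - w‖ := norm_add_le _ _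
        _ ≤ ρ + r := by rw [← hρ]; linarith
    · intro z hz
      exact ((hr' (hball z hz)).2).le
    · -- P3a
      intro w hw hwt
      have hkey := key_est w hw hwt
      have hnn : (0:ℝ) ≤ 3/4*δ₀*(ρ+r) := by positivity
      nlinarith [hδ₀, hρpos]
    · -- P3b
      intro w hw hwt _
      have hkey := key_est w hw hwt
      nlinarith [hδ₀, hρpos, hr16]
  · -- low case
    push_neg at hcase
    set Rr := σ / (4*δ₀) with hRr
    have hRrpos : 0 < Rr := by positivity
    have hIx : lam * ψx - Φ x < c - 2*σ := by
      have h := hcase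
      rw [ILam_eq_coe hΨnn hψxt] at h
      exact_mod_cast h
    have E1 : ∀ᶠ w in 𝓝 x, ((ψx - δ₀ * Rr / (8 * lam) : ℝ) : EReal) < Ψ w := by
      apply hΨlsc x
      rw [← hψxc]
      exact_mod_cast sub_lt_self ψx (by positivity)
    have E2 : ∀ᶠ z in 𝓝 x, ‖fderiv ℝ Φ z - fderiv ℝ Φ x‖ < δ₀ / 8 := by
      have hb := hcontent.continuousAt (x := x)
        (Metric.ball_mem_nhds (fderiv ℝ Φ x) (by positivity : (0:ℝ) < δ₀/8))
      filter_upwards [hb] with z hz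
      rwa [mem_preimage, mem_ball_iff_norm] at hz
    have E3 : ∀ᶠ w in 𝓝 x, |Φ w - Φ x| < δ₀ * Rr / 16 := by
      have hb := hΦ.continuous.continuousAt (x := x)
        (Metric.ball_mem_nhds (Φ x) (by positivity : (0:ℝ) < δ₀*Rr/16))
      filter_upwards [hb] with z hz
      rw [mem_preimage, mem_ball_iff_norm] at hz
      rwa [Real.norm_eq_abs] at hz
    obtain ⟨r', hr'pos, hr'⟩ := Metric.eventually_nhds_iff.1 ((E1.and E2).and E3)
    set M := ‖fderiv ℝ Φ x‖ with hM
    have hMnn : 0 ≤ M := norm_nonneg _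
    set r := min (r'/2) (min Rr (δ₀*Rr/(16*(M+δ₀)))) with hrdef
    have hrpos : 0 < r := by
      apply lt_min (by positivity) (lt_min (by positivity) (by positivity))
    have hrR : r ≤ Rr := le_trans (min_le_right _ _) (min_le_left _ _)
    have hrM : r ≤ δ₀*Rr/(16*(M+δ₀)) := le_trans (min_le_right _ _) (min_le_right _ _)
    have hball : ∀ w ∈ closedBall x r, dist w x < r' := by
      intro w hw
      have h := mem_closedBall.1 hw
      have h2 : r < r' := lt_of_le_of_lt (min_le_left _ _) (by linarith)
      linarith
    have key_shared : ∀ w ∈ closedBall x r, Ψ w ≠ ⊤ →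
        |fderiv ℝ Φ w (x - w)| ≤ δ₀ * Rr / 16 ∧ |Φ w - Φ x| ≤ δ₀ * Rr / 16 ∧
          ψx - δ₀ * Rr / (8 * lam) < (Ψ w).toReal := by
      intro w hw hwt
      have hψwc : (((Ψ w).toReal : ℝ) : EReal) = Ψ w := ereal_coe_toReal_of hwt (hΨnn w)
      have h1 : ψx - δ₀ * Rr / (8 * lam) < (Ψ w).toReal := by
        have h := ((hr' (hball w hw)).1).1
        rw [← hψwc] at h
        exact_mod_cast h
      have h2 : ‖fderiv ℝ Φ w - fderiv ℝ Φ x‖ ≤ δ₀/8 := (((hr' (hball w hw)).1).2).le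
      have h3 : |Φ w - Φ x| ≤ δ₀ * Rr / 16 := ((hr' (hball w hw)).2).le
      have hfw : ‖fderiv ℝ Φ w‖ ≤ M + δ₀/8 := by
        calc ‖fderiv ℝ Φ w‖ = ‖fderiv ℝ Φ x + (fderiv ℝ Φ w - fderiv ℝ Φ x)‖ := by
              congr 1; abel
          _ ≤ M + δ₀/8 := le_trans (norm_add_le _ _) (by rw [← hM]; linarith)
      have hxw : ‖x - w‖ ≤ r := by rw [← dist_eq_norm, dist_comm]; exact mem_closedBall.1 hw
      have ha2 : |fderiv ℝ Φ w (x - w)| ≤ δ₀ * Rr / 16 := by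
        rw [← Real.norm_eq_abs]
        calc ‖fderiv ℝ Φ w (x - w)‖ ≤ ‖fderiv ℝ Φ w‖ * ‖x - w‖ :=
              ContinuousLinearMap.le_opNorm _ _
          _ ≤ (M + δ₀) * (δ₀*Rr/(16*(M+δ₀))) :=
              mul_le_mul (by linarith) (le_trans hxw hrM) (norm_nonneg _) (by linarith)
          _ = δ₀ * Rr / 16 := by field_simp
      exact ⟨ha2, h3, h1⟩
    refine ⟨x, Rr, r, hrpos, hRrpos, hrR, hψxt, ?_, ?_, ?_, ?_⟩
    · intro w hw
      have h1 : ‖x - w‖ ≤ r := by rw [← dist_eq_norm, dist_comm]; exact mem_closedBall.1 hw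
      linarith
    · intro z hz
      exact (((hr' (hball z hz)).1).2).le
    · -- P3a
      intro w hw hwt
      obtain ⟨ha2, h3, h1⟩ := key_shared w hw hwt
      have habs2 := abs_le.1 ha2
      have hlε : lam * (ψx - (Ψ w).toReal) ≤ δ₀ * Rr / 8 := by
        have hle : ψx - (Ψ w).toReal ≤ δ₀ * Rr / (8 * lam) := by linarith
        calc lam * (ψx - (Ψ w).toReal) ≤ lam * (δ₀ * Rr / (8*lam)) :=
              mul_le_mul_of_nonneg_left hle hlam.le
          _ = δ₀ * Rr / 8 := by field_simp
      have hpos : 0 < δ₀ * Rr := by positivity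
      linarith
    · -- P3b
      intro w hw hwt hIw
      obtain ⟨ha2, h3, h1⟩ := key_shared w hw hwt
      have habs2 := abs_le.1 ha2
      have habs3 := abs_le.1 h3
      have hIw' : c - σ ≤ lam * (Ψ w).toReal - Φ w := by
        rw [ILam_eq_coe hΨnn hwt] at hIw
        exact_mod_cast hIw
      have hσR : σ = 4 * δ₀ * Rr := by rw [hRr]; field_simp
      have hlm : lam * ψx - lam * (Ψ w).toReal ≤ -σ + (Φ x - Φ w) := by linarith
      have hpos : 0 < δ₀ * Rr := by positivity
      linarith

lemma ereal_le_coe_iff {x : EReal} {y : ℝ} (h0 : 0 ≤ x) :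
    x ≤ (y : EReal) ↔ x ≠ ⊤ ∧ x.toReal ≤ y := by
  constructor
  · intro h
    have hx : x ≠ ⊤ := fun ht => by rw [ht] at h; simp at h
    refine ⟨hx, ?_⟩
    rw [← ereal_coe_toReal_of hx h0] at h
    exact_mod_cast h
  · rintro ⟨hx, h⟩
    rw [← ereal_coe_toReal_of hx h0]
    exact_mod_cast h

lemma psi_jensen (Ψ : X → EReal)
    (hΨnn : ∀ u : X, 0 ≤ Ψ u)
    (hΨconv : ∀ u v : X, ∀ a b : ℝ, 0 ≤ a → 0 ≤ b → a + b = 1 →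
      Ψ (a • u + b • v) ≤ (a : EReal) * Ψ u + (b : EReal) * Ψ v)
    {ι : Type*} [DecidableEq ι] (S : Finset ι) (a : ι → ℝ) (p : ι → X) (b : ι → ℝ)
    (ha : ∀ i ∈ S, 0 ≤ a i) (hsum : ∑ i ∈ S, a i = 1)
    (hb : ∀ i ∈ S, Ψ (p i) ≤ ((b i : ℝ) : EReal)) :
    Ψ (∑ i ∈ S, a i • p i) ≤ ((∑ i ∈ S, a i * b i : ℝ) : EReal) := by
  induction S using Finset.induction_on generalizing a b p with
  | empty => simp at hsum
  | @insert j S hj IH =>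
    rw [Finset.sum_insert hj] at hsum ⊢
    rw [Finset.sum_insert hj]
    have haj : 0 ≤ a j := ha j (Finset.mem_insert_self j S)
    have haS : ∀ i ∈ S, 0 ≤ a i := fun i hi => ha i (Finset.mem_insert_of_mem hi)
    have hbS : ∀ i ∈ S, Ψ (p i) ≤ ((b i : ℝ) : EReal) :=
      fun i hi => hb i (Finset.mem_insert_of_mem hi)
    set s' := ∑ i ∈ S, a i with hs'
    have hs'nn : 0 ≤ s' := Finset.sum_nonneg haS
    rcases eq_or_lt_of_le hs'nn with hz | hpos
    · -- s' = 0, so a j = 1 and all a i = 0 on S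
      have hall : ∀ i ∈ S, a i = 0 := by
        intro i hi
        exact (Finset.sum_eq_zero_iff_of_nonneg haS).1 hz.symm i hi
      have haj1 : a j = 1 := by rw [← hz] at hsum; linarith
      have h1 : ∑ i ∈ S, a i • p i = 0 := Finset.sum_eq_zero fun i hi => by
        rw [hall i hi, zero_smul]
      have h2 : ∑ i ∈ S, a i * b i = 0 := Finset.sum_eq_zero fun i hi => by
        rw [hall i hi, zero_mul]
      rw [h1, h2, haj1, one_smul, add_zero, add_zero, one_mul]
      exact hb j (Finset.mem_insert_self j S)
    · -- s' > 0
      set a' : ι → ℝ := fun i => a i / s' with ha'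
      have hsum' : ∑ i ∈ S, a' i = 1 := by
        rw [← Finset.sum_div, ← hs', div_self (ne_of_gt hpos)]
      have ha'nn : ∀ i ∈ S, 0 ≤ a' i := fun i hi => div_nonneg (haS i hi) hs'nn
      have IH' := IH a' p b ha'nn hsum' hbS
      set y := ∑ i ∈ S, a' i • p i with hy
      set B := ∑ i ∈ S, a' i * b i with hB
      -- Ψ y is finite
      have hyfin : Ψ y ≠ ⊤ ∧ (Ψ y).toReal ≤ B := (ereal_le_coe_iff (hΨnn y)).1 IH'
      have hpjfin : Ψ (p j) ≠ ⊤ ∧ (Ψ (p j)).toReal ≤ b j :=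
        (ereal_le_coe_iff (hΨnn (p j))).1 (hb j (Finset.mem_insert_self j S))
      have hSy : ∑ i ∈ S, a i • p i = s' • y := by
        rw [hy, Finset.smul_sum]
        refine Finset.sum_congr rfl fun i hi => ?_
        rw [ha', smul_smul]
        congr 1
        field_simp
      have hSb : ∑ i ∈ S, a i * b i = s' * B := by
        rw [hB, Finset.mul_sum]
        refine Finset.sum_congr rfl fun i hi => ?_
        simp only [ha']
        field_simp
      rw [hSy, hSb]
      have hc := hΨconv (p j) y (a j) s' haj hs'nn hsum
      refine le_trans hc ?_
      rw [← ereal_coe_toReal_of hpjfin.1 (hΨnn (p j)), ← ereal_coe_toReal_of hyfin.1 (hΨnn y)]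
      rw [← EReal.coe_mul, ← EReal.coe_mul, ← EReal.coe_add]
      apply EReal.coe_le_coe_iff.2
      nlinarith [hpjfin.2, hyfin.2, mul_le_mul_of_nonneg_left hyfin.2 hs'nn,
        mul_le_mul_of_nonneg_left hpjfin.2 haj]


theorem deformation_lemma
    [CompleteSpace X]
    (Ψ : X → EReal) (Φ : X → ℝ)
    -- (Ψ1)
    (hΨ0 : Ψ 0 = 0)
    (hΨnn : ∀ u : X, 0 ≤ Ψ u)
    (hΨlsc : LowerSemicontinuous Ψ)
    (hΨconv : ∀ u v : X, ∀ a b : ℝ, 0 ≤ a → 0 ≤ b → a + b = 1 →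
      Ψ (a • u + b • v) ≤ (a : EReal) * Ψ u + (b : EReal) * Ψ v)
    -- (Φ1)
    (hΦ : ContDiff ℝ 1 Φ)
    -- the data
    (lam : ℝ) (hlam : 0 < lam)
    (A : Set X) (hAclosed : IsClosed A) (hAbdd : IsBounded A)
    (c σ : ℝ) (hσ : 0 < σ)
    (δ₀ : ℝ) (hδ₀ : 0 < δ₀)
    -- on 𝒜 = A ∩ {c − 3σ ≤ I_λ ≤ c + 3σ} there are strictly descent directions
    (hdesc : ∀ u ∈ A ∩ {w : X | ((c - 3 * σ : ℝ) : EReal) ≤ ILam Ψ Φ lam w ∧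
        ILam Ψ Φ lam w ≤ ((c + 3 * σ : ℝ) : EReal)},
      ∃ v : X, v ≠ u ∧
        (lam : EReal) * (Ψ v - Ψ u) - ((fderiv ℝ Φ u (v - u) : ℝ) : EReal) <
          ((-(5 * δ₀ * ‖v - u‖) : ℝ) : EReal))
    -- K ⊂ 𝒜 relatively compact
    (K : Set X)
    (hK : K ⊆ A ∩ {w : X | ((c - 3 * σ : ℝ) : EReal) ≤ ILam Ψ Φ lam w ∧
        ILam Ψ Φ lam w ≤ ((c + 3 * σ : ℝ) : EReal)})
    (hKcomp : IsCompact (closure K)) :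
    ∃ (W W' : Set X), IsOpen W ∧ IsOpen W' ∧
      closure K ⊆ W ∧ closure W ⊆ W' ∧
      ∃ s₀ : ℝ, 0 < s₀ ∧ ∃ η : ℝ → X → X,
        ContinuousOn (fun p : ℝ × X => η p.1 p.2) (Ici 0 ×ˢ univ) ∧
        -- (i)
        (∀ s ∈ Ici (0 : ℝ), ∀ w : X, ‖η s w - w‖ ≤ s) ∧
        (∀ s ∈ Ici (0 : ℝ), ∀ w : X, w ∉ W' → η s w = w) ∧
        -- (ii)
        (∀ s ∈ Icc 0 s₀, ∀ w : X,
          ILam Ψ Φ lam (η s w) ≤ ILam Ψ Φ lam w + ((δ₀ * s : ℝ) : EReal)) ∧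
        -- (iii)
        (∀ s ∈ Icc 0 s₀, ∀ w ∈ W, ((c - σ : ℝ) : EReal) ≤ ILam Ψ Φ lam w →
          ILam Ψ Φ lam (η s w) ≤ ILam Ψ Φ lam w - ((2 * δ₀ * s : ℝ) : EReal)) := by
  classical
  rcases eq_empty_or_nonempty (closure K) with hKe | hKne
  · -- empty closure: everything trivial
    refine ⟨∅, ∅, isOpen_empty, isOpen_empty, by simp [hKe], by simp, 1, one_pos,
      fun _ w => w, continuous_snd.continuousOn, ?_, ?_, ?_, ?_⟩
    · intro s hs w; simpa using hs
    · intro s _ w _; rfl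
    · intro s hs w
      calc ILam Ψ Φ lam w = ILam Ψ Φ lam w + (0 : EReal) := by rw [add_zero]
        _ ≤ ILam Ψ Φ lam w + ((δ₀ * s : ℝ) : EReal) := by
            apply add_le_add le_rfl
            exact_mod_cast mul_nonneg hδ₀.le hs.1
    · intro s _ w hw; exact absurd hw (notMem_empty w)
  -- nonempty case
  have hclA : closure K ⊆ A := hAclosed.closure_subset_iff.2 (fun u hu => (hK hu).1)
  -- sublevel bound persists on the closure
  have hclI : ∀ x ∈ closure K, ILam Ψ Φ lam x ≤ ((c + 3 * σ : ℝ) : EReal) := by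
    have hcl : IsClosed {u : X | Ψ u ≤ (((c + 3*σ + Φ u)/lam : ℝ) : EReal)} := by
      rw [← isOpen_compl_iff, isOpen_iff_mem_nhds]
      intro u hu
      simp only [mem_compl_iff, mem_setOf_eq, not_le] at hu
      obtain ⟨q, hq1, hq2⟩ := EReal.exists_between_coe_real hu
      have h1 : ∀ᶠ z in 𝓝 u, ((q:ℝ):EReal) < Ψ z := hΨlsc u _ hq2
      have hgc : Continuous fun z : X => (c + 3*σ + Φ z)/lam := by
        exact (continuous_const.add hΦ.continuous).div_const lam
      have hq1' : (c + 3*σ + Φ u)/lam < q := by exact_mod_cast hq1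
      have h2 : ∀ᶠ z in 𝓝 u, (c + 3*σ + Φ z)/lam < q :=
        (hgc.continuousAt (x := u)).eventually_lt continuousAt_const hq1'
      filter_upwards [h1, h2] with z hz1 hz2
      simp only [mem_compl_iff, mem_setOf_eq, not_le]
      calc (((c + 3*σ + Φ z)/lam : ℝ) : EReal) < ((q:ℝ):EReal) := by exact_mod_cast hz2
        _ < Ψ z := hz1
    have hKsub : K ⊆ {u : X | Ψ u ≤ (((c + 3*σ + Φ u)/lam : ℝ) : EReal)} := by
      intro u hu
      have h := (hK hu).2.2
      have hut : Ψ u ≠ ⊤ := psi_ne_top_of_ILam_le hlam h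
      rw [ILam_eq_coe hΨnn hut] at h
      have h' : lam * (Ψ u).toReal - Φ u ≤ c + 3*σ := by exact_mod_cast h
      have h'' : (Ψ u).toReal ≤ (c + 3*σ + Φ u)/lam := by
        rw [le_div_iff₀ hlam]; linarith
      rw [mem_setOf_eq, ← ereal_coe_toReal_of hut (hΨnn u)]
      exact_mod_cast h''
    intro x hx
    have hmem := hcl.closure_subset_iff.2 hKsub hx
    rw [mem_setOf_eq] at hmem
    have hxt : Ψ x ≠ ⊤ := ne_top_of_le_ne_top (EReal.coe_ne_top _) hmem
    rw [← ereal_coe_toReal_of hxt (hΨnn x)] at hmem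
    have h' : (Ψ x).toReal ≤ (c + 3*σ + Φ x)/lam := by exact_mod_cast hmem
    rw [ILam_eq_coe hΨnn hxt]
    have : lam * (Ψ x).toReal - Φ x ≤ c + 3*σ := by
      rw [le_div_iff₀ hlam] at h'; linarith
    exact_mod_cast this
  choose! v Rr r hrpos hRpos hrR hvtop hP1 hP2 hP3a hP3b using
    fun x (hx : x ∈ closure K) =>
      perBall Ψ Φ hΨnn hΨlsc hΦ lam hlam A c σ hσ δ₀ hδ₀ hdesc x (hclA hx) (hclI x hx)
  obtain ⟨t, htcl, hcov⟩ := hKcomp.elim_nhds_subcover (fun x => ball x (r x / 3))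
    (fun x hx => ball_mem_nhds x (by have := hrpos x hx; positivity))
  have htne : t.Nonempty := by
    obtain ⟨y, hy⟩ := hKne
    have hm := hcov hy
    rw [mem_iUnion₂] at hm
    obtain ⟨x, hx, _⟩ := hm
    exact ⟨x, hx⟩
  -- data for the centers
  have htr : ∀ x ∈ t, 0 < r x := fun x hx => hrpos x (htcl x hx)
  have htR : ∀ x ∈ t, 0 < Rr x := fun x hx => hRpos x (htcl x hx)
  -- partition of unity
  set τ : X → X → ℝ := fun x w => max 0 (min 1 ((r x / 2 - ‖w - x‖) * (6 / r x))) with hτdef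
  set Sm : X → ℝ := fun w => ∑ x ∈ t, τ x w with hSmdef
  set π : X → X → ℝ := fun x w => τ x w / max 1 (Sm w) with hπdef
  set V : X → X := fun w => ∑ x ∈ t, π x w • ((Rr x)⁻¹ • (v x - w)) with hVdef
  set η : ℝ → X → X := fun s w => w + s • V w with hηdef
  set s₀ : ℝ := t.inf' htne (fun x => min (r x / 2) (Rr x)) with hs₀def
  set W : Set X := ⋃ x ∈ t, ball x (r x / 3) with hWdef
  set W' : Set X := ⋃ x ∈ t, ball x (r x / 2) with hW'def
  -- basic facts about τ, π
  have hτnn : ∀ x w, 0 ≤ τ x w := fun x w => le_max_left _ _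
  have hτle1 : ∀ x w, τ x w ≤ 1 := fun x w => max_le zero_le_one (min_le_left _ _)
  have hτsupp : ∀ x ∈ t, ∀ w : X, τ x w ≠ 0 → ‖w - x‖ < r x / 2 := by
    intro x hx w hne
    have hr := htr x hx
    by_contra hge
    push_neg at hge
    apply hne
    have h1 : (r x / 2 - ‖w - x‖) * (6 / r x) ≤ 0 :=
      mul_nonpos_of_nonpos_of_nonneg (by linarith) (by positivity)
    have h2 : min 1 ((r x / 2 - ‖w - x‖) * (6 / r x)) ≤ 0 := le_trans (min_le_right _ _) h1
    simp only [hτdef]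
    exact max_eq_left h2
  have hτ1 : ∀ x ∈ t, ∀ w : X, w ∈ ball x (r x / 3) → τ x w = 1 := by
    intro x hx w hw
    rw [mem_ball_iff_norm] at hw
    have hr := htr x hx
    have h1 : (1:ℝ) ≤ (r x / 2 - ‖w - x‖) * (6 / r x) := by
      rw [← div_le_iff₀ (by positivity : (0:ℝ) < 6 / r x)]
      have : (1:ℝ) / (6 / r x) = r x / 6 := by field_simp
      rw [this]
      linarith
    simp only [hτdef]
    rw [min_eq_left h1, max_eq_right zero_le_one]
  have hSnn : ∀ w, 0 ≤ Sm w := fun w => Finset.sum_nonneg fun x _ => hτnn x w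
  have hπnn : ∀ x w, 0 ≤ π x w := fun x w => div_nonneg (hτnn x w) (by positivity)
  have hπτ : ∀ x w, π x w ≠ 0 → τ x w ≠ 0 := by
    intro x w h hτ0
    simp only [hπdef, hτ0, zero_div] at h
    exact h rfl
  have hπsum_le : ∀ w, ∑ x ∈ t, π x w ≤ 1 := by
    intro w
    simp only [hπdef]
    rw [← Finset.sum_div]
    rw [div_le_one (by positivity)]
    exact le_trans (le_of_eq rfl) (le_max_right 1 (Sm w))
  have hπsum_one : ∀ w ∈ W, ∑ x ∈ t, π x w = 1 := by
    intro w hw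
    rw [hWdef, mem_iUnion₂] at hw
    obtain ⟨x, hx, hwx⟩ := hw
    have hS1 : 1 ≤ Sm w := by
      rw [← hτ1 x hx w hwx]
      exact Finset.single_le_sum (f := fun y => τ y w) (fun y _ => hτnn y w) hx
    simp only [hπdef]
    rw [← Finset.sum_div, max_eq_right hS1]
    exact div_self (by linarith)
  -- support facts
  have hsupp_ball : ∀ x ∈ t, ∀ w : X, π x w ≠ 0 → w ∈ closedBall x (r x) ∧ ‖w - x‖ < r x / 2 := by
    intro x hx w h
    have h2 := hτsupp x hx w (hπτ x w h)
    constructor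
    · rw [mem_closedBall, dist_eq_norm]
      have := htr x hx
      linarith
    · exact h2
  -- norm of each summand of V
  have hVterm : ∀ x ∈ t, ∀ w : X, ‖π x w • ((Rr x)⁻¹ • (v x - w))‖ ≤ π x w := by
    intro x hx w
    by_cases h : π x w = 0
    · simp [h]
    · have hball := (hsupp_ball x hx w h).1
      have hP := hP1 x (htcl x hx) w hball
      have hRx := htR x hx
      rw [norm_smul, norm_smul, Real.norm_eq_abs, Real.norm_eq_abs,
        abs_of_nonneg (hπnn x w), abs_of_nonneg (by positivity : (0:ℝ) ≤ (Rr x)⁻¹)]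
      calc π x w * ((Rr x)⁻¹ * ‖v x - w‖) ≤ π x w * 1 := by
            apply mul_le_mul_of_nonneg_left _ (hπnn x w)
            rw [inv_mul_le_iff₀ hRx, mul_one]
            exact hP
        _ = π x w := mul_one _
  have hVnorm : ∀ w, ‖V w‖ ≤ 1 := by
    intro w
    calc ‖V w‖ ≤ ∑ x ∈ t, ‖π x w • ((Rr x)⁻¹ • (v x - w))‖ := norm_sum_le _ _
      _ ≤ ∑ x ∈ t, π x w := Finset.sum_le_sum fun x hx => hVterm x hx w
      _ ≤ 1 := hπsum_le w
  -- s₀ facts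
  have hs₀pos : 0 < s₀ := by
    rw [hs₀def, Finset.lt_inf'_iff]
    intro x hx
    exact lt_min (by have := htr x hx; linarith) (htR x hx)
  have hs₀le : ∀ x ∈ t, s₀ ≤ min (r x / 2) (Rr x) := fun x hx => Finset.inf'_le _ hx
  -- continuity
  have hτcont : ∀ x : X, Continuous (τ x) := by
    intro x
    apply continuous_const.max
    apply continuous_const.min
    exact ((continuous_const.sub (continuous_id.sub continuous_const).norm).mul continuous_const)
  have hScont : Continuous Sm := continuous_finset_sum t fun x _ => hτcont x
  have hπcont : ∀ x : X, Continuous (fun w => π x w) := by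
    intro x
    exact (hτcont x).div (continuous_const.max hScont) (fun w => by positivity)
  have hVcont : Continuous V := by
    apply continuous_finset_sum t
    intro x _
    exact (hπcont x).smul (continuous_const.smul (continuous_const.sub continuous_id))
  have hηcont : Continuous (fun p : ℝ × X => η p.1 p.2) := by
    exact continuous_snd.add (continuous_fst.smul (hVcont.comp continuous_snd))
  -- conclusion (i)
  have hi1 : ∀ s ∈ Ici (0:ℝ), ∀ w : X, ‖η s w - w‖ ≤ s := by
    intro s hs w
    simp only [hηdef, add_sub_cancel_left, norm_smul, Real.norm_eq_abs,
      abs_of_nonneg (mem_Ici.1 hs)]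
    calc s * ‖V w‖ ≤ s * 1 := mul_le_mul_of_nonneg_left (hVnorm w) (mem_Ici.1 hs)
      _ = s := mul_one s
  have hi2 : ∀ s ∈ Ici (0:ℝ), ∀ w : X, w ∉ W' → η s w = w := by
    intro s _ w hw
    have hV0 : V w = 0 := by
      apply Finset.sum_eq_zero
      intro x hx
      have hπ0 : π x w = 0 := by
        by_contra h
        apply hw
        rw [hW'def, mem_iUnion₂]
        exact ⟨x, hx, by rw [mem_ball_iff_norm]; exact (hsupp_ball x hx w h).2⟩
      rw [hπ0, zero_smul]
    simp [hηdef, hV0]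
  -- subsets
  have hWopen : IsOpen W := isOpen_biUnion fun x _ => isOpen_ball
  have hW'open : IsOpen W' := isOpen_biUnion fun x _ => isOpen_ball
  have hKW : closure K ⊆ W := hcov
  have hWW' : closure W ⊆ W' := by
    have hU : IsClosed (⋃ x ∈ t, closedBall x (r x / 3)) :=
      t.finite_toSet.isClosed_biUnion fun x _ => isClosed_closedBall
    have h1 : W ⊆ ⋃ x ∈ t, closedBall x (r x / 3) := by
      apply iUnion₂_mono
      intro x hx
      exact ball_subset_closedBall
    refine (closure_minimal h1 hU).trans ?_
    apply iUnion₂_mono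
    intro x hx
    intro y hy
    rw [mem_closedBall] at hy
    rw [mem_ball]
    have := htr x hx
    linarith
  -- the core estimate
  have core : ∀ s ∈ Icc (0:ℝ) s₀, ∀ w : X, Ψ w ≠ ⊤ → ∀ C : X → ℝ,
      (∀ x ∈ t, π x w ≠ 0 → lam * ((Ψ (v x)).toReal - (Ψ w).toReal)
          - fderiv ℝ Φ w (v x - w) ≤ C x) →
      ILam Ψ Φ lam (η s w) ≤
        (((lam * (Ψ w).toReal - Φ w) + ∑ x ∈ t.filter (fun x => π x w ≠ 0),
            π x w * (s / Rr x) * C x + δ₀/4 * s : ℝ) : EReal) := by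
    intro s hs w hwt C hC
    obtain ⟨hs0, hss₀⟩ := hs
    set ψw := (Ψ w).toReal with hψw
    set J := t.filter (fun x => π x w ≠ 0) with hJdef
    have hJt : ∀ x ∈ J, x ∈ t := fun x hx => (Finset.mem_filter.1 hx).1
    have hJπ : ∀ x ∈ J, π x w ≠ 0 := fun x hx => (Finset.mem_filter.1 hx).2
    have hJballs : ∀ x ∈ J, w ∈ closedBall x (r x) ∧ ‖w - x‖ < r x / 2 :=
      fun x hx => hsupp_ball x (hJt x hx) w (hJπ x hx)
    have htx01 : ∀ x ∈ J, 0 ≤ s / Rr x ∧ s / Rr x ≤ 1 := by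
      intro x hx
      have hRx := htR x (hJt x hx)
      constructor
      · positivity
      · rw [div_le_one hRx]
        exact le_trans hss₀ (le_trans (hs₀le x (hJt x hx)) (min_le_right _ _))
    have hVJ : V w = ∑ x ∈ J, π x w • ((Rr x)⁻¹ • (v x - w)) := by
      rw [hJdef]
      exact (Finset.sum_filter_of_ne (fun x hx h => by
        intro hπ0
        apply h
        rw [hπ0, zero_smul])).symm
    have hθeq : ∑ x ∈ J, π x w = ∑ x ∈ t, π x w := by
      rw [hJdef]
      exact Finset.sum_filter_of_ne (fun x hx h => h)
    set θ := ∑ x ∈ J, π x w with hθdef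
    have hθ1 : θ ≤ 1 := by rw [hθeq]; exact hπsum_le w
    have hθ0 : 0 ≤ θ := Finset.sum_nonneg fun x _ => hπnn x w
    -- Jensen combination
    set a : Option X → ℝ := fun o => o.elim (1 - θ) (fun x => π x w) with hadef
    set p : Option X → X := fun o => o.elim w (fun x => w + (s / Rr x) • (v x - w)) with hpdef
    set b : Option X → ℝ := fun o => o.elim ψw
      (fun x => (1 - s / Rr x) * ψw + (s / Rr x) * (Ψ (v x)).toReal) with hbdef
    set S : Finset (Option X) := insert none (J.image some) with hSdef
    have hnone : (none : Option X) ∉ J.image some := by simp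
    have hinj : ∀ x ∈ J, ∀ y ∈ J, some x = some y → x = y :=
      fun _ _ _ _ h => Option.some.inj h
    have hsumS : ∑ o ∈ S, a o = 1 := by
      rw [hSdef, Finset.sum_insert hnone, Finset.sum_image hinj]
      simp only [hadef, Option.elim_none, Option.elim_some]
      ring
    have haS : ∀ o ∈ S, 0 ≤ a o := by
      intro o ho
      rw [hSdef, Finset.mem_insert] at ho
      rcases ho with h | h
      · rw [h]; simp only [hadef, Option.elim_none]; linarith
      · obtain ⟨x, hx, hx'⟩ := Finset.mem_image.1 h
        rw [← hx']; simp only [hadef, Option.elim_some]; exact hπnn x w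
    have hψwc : ((ψw : ℝ) : EReal) = Ψ w := ereal_coe_toReal_of hwt (hΨnn w)
    have hbS : ∀ o ∈ S, Ψ (p o) ≤ ((b o : ℝ) : EReal) := by
      intro o ho
      rw [hSdef, Finset.mem_insert] at ho
      rcases ho with h | h
      · rw [h]
        simp only [hpdef, hbdef, Option.elim_none]
        rw [hψwc]
      · obtain ⟨x, hx, hx'⟩ := Finset.mem_image.1 h
        rw [← hx']
        simp only [hpdef, hbdef, Option.elim_some]
        have ht01 := htx01 x hx
        have hvx : Ψ (v x) ≠ ⊤ := hvtop x (htcl x (hJt x hx))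
        have hψvc : (((Ψ (v x)).toReal : ℝ) : EReal) = Ψ (v x) :=
          ereal_coe_toReal_of hvx (hΨnn (v x))
        have hcomb : w + (s / Rr x) • (v x - w)
            = (1 - s / Rr x) • w + (s / Rr x) • (v x) := by
          rw [sub_smul, one_smul, smul_sub]; abel
        rw [hcomb]
        refine le_trans (hΨconv w (v x) (1 - s / Rr x) (s / Rr x)
          (by linarith [ht01.2]) ht01.1 (by ring)) ?_
        rw [← hψwc, ← hψvc]
        norm_cast
    have hjensen := psi_jensen Ψ hΨnn hΨconv S a p b haS hsumS hbS
    -- the combination point is η s w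
    have hpt : ∑ o ∈ S, a o • p o = η s w := by
      rw [hSdef, Finset.sum_insert hnone, Finset.sum_image hinj]
      simp only [hadef, hpdef, Option.elim_none, Option.elim_some]
      have hterm : ∀ x ∈ J, π x w • (w + (s / Rr x) • (v x - w))
          = π x w • w + (s • (π x w • ((Rr x)⁻¹ • (v x - w)))) := by
        intro x hx
        rw [smul_add]
        congr 1
        simp only [smul_smul]
        congr 1
        rw [div_eq_mul_inv]
        ring
      rw [Finset.sum_congr rfl hterm, Finset.sum_add_distrib]
      rw [← Finset.sum_smul, ← hθdef, ← Finset.smul_sum, ← hVJ]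
      simp only [hηdef]
      rw [sub_smul, one_smul]
      abel
    rw [hpt] at hjensen
    -- pass to reals
    have hηtop : Ψ (η s w) ≠ ⊤ :=
      ne_top_of_le_ne_top (EReal.coe_ne_top _) hjensen
    have hψη : (Ψ (η s w)).toReal ≤ ∑ o ∈ S, a o * b o := by
      rw [← ereal_coe_toReal_of hηtop (hΨnn (η s w))] at hjensen
      exact_mod_cast hjensen
    -- compute the bound q
    have hq : ∑ o ∈ S, a o * b o
        = ψw + ∑ x ∈ J, π x w * (s / Rr x) * ((Ψ (v x)).toReal - ψw) := by
      rw [hSdef, Finset.sum_insert hnone, Finset.sum_image hinj]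
      simp only [hadef, hbdef, Option.elim_none, Option.elim_some]
      have hterm : ∀ x ∈ J, π x w * ((1 - s / Rr x) * ψw + (s / Rr x) * (Ψ (v x)).toReal)
          = π x w * ψw + π x w * (s / Rr x) * ((Ψ (v x)).toReal - ψw) := by
        intro x hx; ring
      rw [Finset.sum_congr rfl hterm, Finset.sum_add_distrib, ← Finset.sum_mul, ← hθdef]
      ring
    -- derivative of Φ at w applied to displacement
    have hdisp : η s w - w = ∑ x ∈ J, (π x w * (s / Rr x)) • (v x - w) := by
      simp only [hηdef, add_sub_cancel_left]
      rw [hVJ, Finset.smul_sum]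
      refine Finset.sum_congr rfl fun x hx => ?_
      simp only [smul_smul]
      congr 1
      rw [div_eq_mul_inv]
      ring
    have hder : fderiv ℝ Φ w (η s w - w)
        = ∑ x ∈ J, π x w * (s / Rr x) * fderiv ℝ Φ w (v x - w) := by
      rw [hdisp, map_sum]
      refine Finset.sum_congr rfl fun x hx => ?_
      rw [ContinuousLinearMap.map_smul]
      simp [smul_eq_mul]
    -- mean value bound for Φ
    have hΦbound : Φ w + fderiv ℝ Φ w (η s w - w) - δ₀/4 * s ≤ Φ (η s w) := by
      rcases Finset.eq_empty_or_nonempty J with hJe | ⟨x₀, hx₀⟩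
      · have h0 : η s w - w = 0 := by rw [hdisp, hJe, Finset.sum_empty]
        have hη : η s w = w := by
          have := sub_eq_zero.1 h0; exact this
        rw [hη, sub_self, map_zero]
        have : 0 ≤ δ₀/4 * s := by positivity
        linarith
      · have hx₀t := hJt x₀ hx₀
        have hrx₀ := htr x₀ hx₀t
        have hwball : w ∈ closedBall x₀ (r x₀) := (hJballs x₀ hx₀).1
        have hηball : η s w ∈ closedBall x₀ (r x₀) := by
          rw [mem_closedBall, dist_eq_norm]
          have h1 : ‖η s w - w‖ ≤ s := hi1 s hs0 w
          have h2 : ‖w - x₀‖ < r x₀ / 2 := (hJballs x₀ hx₀).2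
          have h3 : s ≤ r x₀ / 2 :=
            le_trans hss₀ (le_trans (hs₀le x₀ hx₀t) (min_le_left _ _))
          calc ‖η s w - x₀‖ = ‖(η s w - w) + (w - x₀)‖ := by congr 1; abel
            _ ≤ ‖η s w - w‖ + ‖w - x₀‖ := norm_add_le _ _
            _ ≤ r x₀ := by linarith
        have hbound : ∀ z ∈ closedBall x₀ (r x₀), ‖fderiv ℝ Φ z - fderiv ℝ Φ w‖ ≤ δ₀/4 := by
          intro z hz
          have h1 := hP2 x₀ (htcl x₀ hx₀t) z hz
          have h2 := hP2 x₀ (htcl x₀ hx₀t) w hwball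
          calc ‖fderiv ℝ Φ z - fderiv ℝ Φ w‖
              = ‖(fderiv ℝ Φ z - fderiv ℝ Φ x₀) - (fderiv ℝ Φ w - fderiv ℝ Φ x₀)‖ := by
                congr 1; abel
            _ ≤ ‖fderiv ℝ Φ z - fderiv ℝ Φ x₀‖ + ‖fderiv ℝ Φ w - fderiv ℝ Φ x₀‖ :=
                norm_sub_le _ _
            _ ≤ δ₀/4 := by linarith
        have hmvt := (convex_closedBall x₀ (r x₀)).norm_image_sub_le_of_norm_fderiv_le'
          (f := Φ) (φ := fderiv ℝ Φ w)
          (fun z _ => hΦ.differentiable (by norm_num) z)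
          hbound hwball hηball
        rw [Real.norm_eq_abs] at hmvt
        have habs := (abs_le.1 hmvt).1
        have hn : ‖η s w - w‖ ≤ s := hi1 s hs0 w
        have : δ₀/4 * ‖η s w - w‖ ≤ δ₀/4 * s := by
          apply mul_le_mul_of_nonneg_left hn (by positivity)
        linarith
    -- final assembly in the reals
    rw [ILam_eq_coe hΨnn hηtop]
    apply EReal.coe_le_coe_iff.2
    have h1 : lam * (Ψ (η s w)).toReal ≤ lam * (∑ o ∈ S, a o * b o) :=
      mul_le_mul_of_nonneg_left hψη hlam.le
    have h2 : lam * (∑ o ∈ S, a o * b o)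
        = lam * ψw + ∑ x ∈ J, π x w * (s / Rr x) * (lam * ((Ψ (v x)).toReal - ψw)) := by
      rw [hq, mul_add, Finset.mul_sum]
      congr 1
      refine Finset.sum_congr rfl fun x hx => ?_
      ring
    have h3 : ∑ x ∈ J, (π x w * (s / Rr x) * (lam * ((Ψ (v x)).toReal - ψw))
          - π x w * (s / Rr x) * fderiv ℝ Φ w (v x - w))
        ≤ ∑ x ∈ J, π x w * (s / Rr x) * C x := by
      refine Finset.sum_le_sum fun x hx => ?_
      have hfac : π x w * (s / Rr x) * (lam * ((Ψ (v x)).toReal - ψw))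
          - π x w * (s / Rr x) * fderiv ℝ Φ w (v x - w)
          = π x w * (s / Rr x) * (lam * ((Ψ (v x)).toReal - ψw)
              - fderiv ℝ Φ w (v x - w)) := by ring
      rw [hfac]
      apply mul_le_mul_of_nonneg_left (hC x (hJt x hx) (hJπ x hx))
      exact mul_nonneg (hπnn x w) (htx01 x hx).1
    rw [Finset.sum_sub_distrib] at h3
    rw [hder] at hΦbound
    linarith
  -- conclusion (ii)
  have hii : ∀ s ∈ Icc (0:ℝ) s₀, ∀ w : X,
      ILam Ψ Φ lam (η s w) ≤ ILam Ψ Φ lam w + ((δ₀ * s : ℝ) : EReal) := by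
    intro s hs w
    by_cases hwt : Ψ w = ⊤
    · rw [ILam_eq_top hlam hwt, EReal.top_add_coe]
      exact le_top
    · have hC : ∀ x ∈ t, π x w ≠ 0 →
          lam * ((Ψ (v x)).toReal - (Ψ w).toReal) - fderiv ℝ Φ w (v x - w)
            ≤ 3/4*δ₀*Rr x :=
        fun x hx hπx => hP3a x (htcl x hx) w (hsupp_ball x hx w hπx).1 hwt
      have h := core s hs w hwt _ hC
      refine le_trans h ?_
      rw [ILam_eq_coe hΨnn hwt, ← EReal.coe_add]
      apply EReal.coe_le_coe_iff.2
      have hterm : ∀ x ∈ t.filter (fun x => π x w ≠ 0),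
          π x w * (s / Rr x) * (3/4*δ₀*Rr x) = 3/4*δ₀*s * π x w := by
        intro x hx
        have hR := htR x (Finset.mem_filter.1 hx).1
        field_simp
      have hsum1 : ∑ x ∈ t.filter (fun x => π x w ≠ 0), π x w * (s / Rr x) * (3/4*δ₀*Rr x)
          = 3/4*δ₀*s * ∑ x ∈ t.filter (fun x => π x w ≠ 0), π x w := by
        rw [Finset.sum_congr rfl hterm, ← Finset.mul_sum]
      have hsum2 : ∑ x ∈ t.filter (fun x => π x w ≠ 0), π x w ≤ 1 := by
        rw [Finset.sum_filter_of_ne (fun x hx h => h)]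
        exact hπsum_le w
      have hsumnn : 0 ≤ ∑ x ∈ t.filter (fun x => π x w ≠ 0), π x w :=
        Finset.sum_nonneg (fun x _ => hπnn x w)
      have hsnn : 0 ≤ s := hs.1
      have h34 : 3/4*δ₀*s * (∑ x ∈ t.filter (fun x => π x w ≠ 0), π x w) ≤ 3/4*(δ₀*s) := by
        nlinarith [mul_nonneg (mul_nonneg hδ₀.le hsnn) (sub_nonneg.2 hsum2)]
      have hδs : 0 ≤ δ₀ * s := mul_nonneg hδ₀.le hsnn
      linarith
  -- conclusion (iii)
  have hiii : ∀ s ∈ Icc (0:ℝ) s₀, ∀ w ∈ W, ((c - σ : ℝ) : EReal) ≤ ILam Ψ Φ lam w →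
      ILam Ψ Φ lam (η s w) ≤ ILam Ψ Φ lam w - ((2 * δ₀ * s : ℝ) : EReal) := by
    intro s hs w hwW hIw
    by_cases hwt : Ψ w = ⊤
    · rw [ILam_eq_top hlam hwt, EReal.top_sub_coe]
      exact le_top
    · have hC : ∀ x ∈ t, π x w ≠ 0 →
          lam * ((Ψ (v x)).toReal - (Ψ w).toReal) - fderiv ℝ Φ w (v x - w)
            ≤ -(3*δ₀*Rr x) :=
        fun x hx hπx => hP3b x (htcl x hx) w (hsupp_ball x hx w hπx).1 hwt hIw
      have h := core s hs w hwt _ hC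
      refine le_trans h ?_
      rw [ILam_eq_coe hΨnn hwt, ← EReal.coe_sub]
      apply EReal.coe_le_coe_iff.2
      have hterm : ∀ x ∈ t.filter (fun x => π x w ≠ 0),
          π x w * (s / Rr x) * (-(3*δ₀*Rr x)) = -(3*δ₀*s) * π x w := by
        intro x hx
        have hR := htR x (Finset.mem_filter.1 hx).1
        field_simp
      have hsum1 : ∑ x ∈ t.filter (fun x => π x w ≠ 0), π x w * (s / Rr x) * (-(3*δ₀*Rr x))
          = -(3*δ₀*s) * ∑ x ∈ t.filter (fun x => π x w ≠ 0), π x w := by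
        rw [Finset.sum_congr rfl hterm, ← Finset.mul_sum]
      have hsum2 : ∑ x ∈ t.filter (fun x => π x w ≠ 0), π x w = 1 := by
        rw [Finset.sum_filter_of_ne (fun x hx h => h)]
        exact hπsum_one w hwW
      rw [hsum2, mul_one] at hsum1
      have hδs : 0 ≤ δ₀ * s := mul_nonneg hδ₀.le hs.1
      linarith
  exact ⟨W, W', hWopen, hW'open, hKW, hWW', s₀, hs₀pos, η, hηcont.continuousOn,
    hi1, hi2, hii, hiii⟩


end
end

section
/- Let X be a real normed space, let Ψ̂ : X → (−∞,∞] be lower semicontinuous, convex, with values in [0,∞] and Ψ̂(0) = 0, and let Φ̂ : X → ℝ be of class C¹. For u ∈ X the following are equivalent: (i) u is a critical point of Ψ̂ − Φ̂, i.e. Ψ̂(v) − Ψ̂(u) − Φ̂'(u)(v − u) ≥ 0 for all v ∈ X; (ii) for every convex functional T ∈ C¹(X,ℝ), u is a critical point of (Ψ̂ + T) − (Φ̂ + T), i.e. (Ψ̂ + T)(v) − (Ψ̂ + T)(u) − (Φ̂'(u) + T'(u))(v − u) ≥ 0 for all v ∈ X; (iii) there exists some convex functional T ∈ C¹(X,ℝ)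 for which u is a critical point of (Ψ̂ + T) − (Φ̂ + T). -/
open Set Filter Topology

noncomputable section

lemma line_deriv' {X : Type*} [NormedAddCommGroup X] [NormedSpace ℝ X]
    (T : X → ℝ) (hT : ContDiff ℝ 1 T) (u v : X) :
    HasDerivAt (fun t : ℝ => T (u + t • (v - u))) (fderiv ℝ T u (v - u)) 0 := by
  have hline : HasDerivAt (fun t : ℝ => u + t • (v - u)) (v - u) 0 := by
    simpa using ((hasDerivAt_id (0:ℝ)).smul_const (v - u)).const_add u
  have hT' : HasFDerivAt T (fderiv ℝ T u) (u + (0:ℝ) • (v - u)) := by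
    simpa using (hT.differentiable one_ne_zero u).hasFDerivAt
  exact hT'.comp_hasDerivAt 0 hline

lemma slope_tendsto' {X : Type*} [NormedAddCommGroup X] [NormedSpace ℝ X]
    (T : X → ℝ) (hT : ContDiff ℝ 1 T) (u v : X) :
    Tendsto (fun t : ℝ => (T (u + t • (v - u)) - T u) / t) (𝓝[>] (0:ℝ))
      (𝓝 (fderiv ℝ T u (v - u))) := by
  have h := (hasDerivAt_iff_tendsto_slope.mp (line_deriv' T hT u v))
  have h2 : Tendsto (slope (fun t : ℝ => T (u + t • (v - u))) 0) (𝓝[>] (0:ℝ))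
      (𝓝 (fderiv ℝ T u (v - u))) :=
    h.mono_left (nhdsWithin_mono _ (fun x hx => ne_of_gt hx))
  refine h2.congr' ?_
  filter_upwards [self_mem_nhdsWithin] with t ht
  simp [slope_def_field]

lemma grad_le_sub' {X : Type*} [NormedAddCommGroup X] [NormedSpace ℝ X]
    (T : X → ℝ) (hconv : ConvexOn ℝ univ T) (hT : ContDiff ℝ 1 T) (u v : X) :
    fderiv ℝ T u (v - u) ≤ T v - T u := by
  refine le_of_tendsto (slope_tendsto' T hT u v) ?_
  filter_upwards [Ioo_mem_nhdsGT_of_mem (Set.left_mem_Ico.mpr one_pos)] with t ht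
  have key : T (u + t • (v - u)) ≤ (1 - t) * T u + t * T v := by
    have := hconv.2 (mem_univ u) (mem_univ v) (by linarith [ht.2] : (0:ℝ) ≤ 1 - t)
      (le_of_lt ht.1) (by ring)
    have heq : (1 - t) • u + t • v = u + t • (v - u) := by
      simp [smul_sub, sub_smul]; abel
    simpa [heq, smul_eq_mul] using this
  rw [div_le_iff₀ ht.1]
  nlinarith


theorem critical_point_invariant_under_adding_convex_C1
    {X : Type*} [NormedAddCommGroup X] [NormedSpace ℝ X]
    (Ψ : X → EReal) (Φ : X → ℝ)
    -- Ψ̂ lower semicontinuous, convex, with values in [0,∞], Ψ̂(0) = 0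
    (hΨ0 : Ψ 0 = 0)
    (hΨnn : ∀ u : X, 0 ≤ Ψ u)
    (hΨlsc : LowerSemicontinuous Ψ)
    (hΨconv : ∀ u v : X, ∀ a b : ℝ, 0 ≤ a → 0 ≤ b → a + b = 1 →
      Ψ (a • u + b • v) ≤ (a : EReal) * Ψ u + (b : EReal) * Ψ v)
    -- Φ̂ of class C¹
    (hΦ : ContDiff ℝ 1 Φ)
    (u : X) :
    -- (i) ↔ (ii)
    ((∀ v : X, 0 ≤ Ψ v - Ψ u - ((fderiv ℝ Φ u (v - u) : ℝ) : EReal)) ↔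
      (∀ T : X → ℝ, ConvexOn ℝ univ T → ContDiff ℝ 1 T →
        ∀ v : X, 0 ≤ (Ψ v + ((T v : ℝ) : EReal)) - (Ψ u + ((T u : ℝ) : EReal)) -
          (((fderiv ℝ Φ u + fderiv ℝ T u) (v - u) : ℝ) : EReal))) ∧
    -- (i) ↔ (iii)
    ((∀ v : X, 0 ≤ Ψ v - Ψ u - ((fderiv ℝ Φ u (v - u) : ℝ) : EReal)) ↔
      (∃ T : X → ℝ, ConvexOn ℝ univ T ∧ ContDiff ℝ 1 T ∧
        ∀ v : X, 0 ≤ (Ψ v + ((T v : ℝ) : EReal)) - (Ψ u + ((T u : ℝ) : EReal)) -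
          (((fderiv ℝ Φ u + fderiv ℝ T u) (v - u) : ℝ) : EReal))) := by
  have hvb : ∀ w : X, Ψ w ≠ ⊥ := by
    intro w h; have := hΨnn w; rw [h] at this; simp at this
  have hPQ : (∀ v : X, 0 ≤ Ψ v - Ψ u - ((fderiv ℝ Φ u (v - u) : ℝ) : EReal)) →
      (∀ T : X → ℝ, ConvexOn ℝ univ T → ContDiff ℝ 1 T →
        ∀ v : X, 0 ≤ (Ψ v + ((T v : ℝ) : EReal)) - (Ψ u + ((T u : ℝ) : EReal)) -
          (((fderiv ℝ Φ u + fderiv ℝ T u) (v - u) : ℝ) : EReal)) := by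
    intro hP T hTc hT1 v
    have hune : Ψ u ≠ ⊤ := by
      intro h; have := hP u; rw [h] at this; simp at this
    obtain ⟨r, hr⟩ : ∃ r : ℝ, Ψ u = (r : EReal) :=
      ⟨(Ψ u).toReal, (EReal.coe_toReal hune (hvb u)).symm⟩
    by_cases hv : Ψ v = ⊤
    · rw [hv, hr, ← EReal.coe_add, EReal.top_add_coe, EReal.top_sub_coe,
        EReal.top_sub_coe]
      exact le_top
    · obtain ⟨s, hs⟩ : ∃ s : ℝ, Ψ v = (s : EReal) :=
        ⟨(Ψ v).toReal, (EReal.coe_toReal hv (hvb v)).symm⟩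
      have h1 : fderiv ℝ Φ u (v - u) ≤ s - r := by
        have h := hP v
        rw [hs, hr] at h
        have : (0:ℝ) ≤ s - r - fderiv ℝ Φ u (v - u) := by exact_mod_cast h
        linarith
      have h2 : fderiv ℝ T u (v - u) ≤ T v - T u := grad_le_sub' T hTc hT1 u v
      rw [hs, hr]
      have : (0:ℝ) ≤ (s + T v) - (r + T u) -
          ((fderiv ℝ Φ u + fderiv ℝ T u) (v - u)) := by
        simp only [ContinuousLinearMap.add_apply]
        linarith
      exact_mod_cast this
  have hRP : (∃ T : X → ℝ, ConvexOn ℝ univ T ∧ ContDiff ℝ 1 T ∧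
        ∀ v : X, 0 ≤ (Ψ v + ((T v : ℝ) : EReal)) - (Ψ u + ((T u : ℝ) : EReal)) -
          (((fderiv ℝ Φ u + fderiv ℝ T u) (v - u) : ℝ) : EReal)) →
      (∀ v : X, 0 ≤ Ψ v - Ψ u - ((fderiv ℝ Φ u (v - u) : ℝ) : EReal)) := by
    rintro ⟨T, hTc, hT1, hcr⟩ v
    have hune : Ψ u ≠ ⊤ := by
      intro h
      have h0 := hcr u
      rw [h] at h0
      simp at h0
    obtain ⟨r, hr⟩ : ∃ r : ℝ, Ψ u = (r : EReal) :=
      ⟨(Ψ u).toReal, (EReal.coe_toReal hune (hvb u)).symm⟩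
    by_cases hv : Ψ v = ⊤
    · rw [hv, hr, EReal.top_sub_coe, EReal.top_sub_coe]; exact le_top
    · obtain ⟨s, hs⟩ : ∃ s : ℝ, Ψ v = (s : EReal) :=
        ⟨(Ψ v).toReal, (EReal.coe_toReal hv (hvb v)).symm⟩
      rw [hs, hr]
      have key : fderiv ℝ Φ u (v - u) ≤ s - r := by
        set C : ℝ := (fderiv ℝ Φ u + fderiv ℝ T u) (v - u) with hC
        -- for each t ∈ (0,1): C - (s - r) ≤ (T (u + t•(v-u)) - T u)/t
        have step : ∀ t : ℝ, t ∈ Ioo (0:ℝ) 1 →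
            C - (s - r) ≤ (T (u + t • (v - u)) - T u) / t := by
          intro t ht
          have hconvt : Ψ (u + t • (v - u)) ≤ (((1 - t) * r + t * s : ℝ) : EReal) := by
            have := hΨconv u v (1 - t) t (by linarith [ht.2]) (le_of_lt ht.1) (by ring)
            have heq : (1 - t) • u + t • v = u + t • (v - u) := by
              simp [smul_sub, sub_smul]; abel
            rw [heq] at this
            calc Ψ (u + t • (v - u)) ≤ ((1 - t : ℝ) : EReal) * Ψ u + ((t:ℝ) : EReal) * Ψ v := this
              _ = (((1 - t) * r + t * s : ℝ) : EReal) := by rw [hr, hs]; norm_cast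
          have hcrt := hcr (u + t • (v - u))
          rw [hr] at hcrt
          have hlin : ((fderiv ℝ Φ u + fderiv ℝ T u) ((u + t • (v - u)) - u)) = t * C := by
            rw [hC]
            have : (u + t • (v - u)) - u = t • (v - u) := by abel
            rw [this, map_smul, smul_eq_mul]
          rw [hlin] at hcrt
          -- hcrt : 0 ≤ (Ψ w + T w) - (r + T u) - (t*C)
          have hwne : Ψ (u + t • (v - u)) ≠ ⊤ := by
            intro h; rw [h] at hconvt; exact (not_le.mpr (EReal.coe_lt_top _)) hconvt
          obtain ⟨q, hq⟩ : ∃ q : ℝ, Ψ (u + t • (v - u)) = (q : EReal) :=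
            ⟨_, (EReal.coe_toReal hwne (hvb _)).symm⟩
          rw [hq] at hcrt hconvt
          have hq1 : q ≤ (1 - t) * r + t * s := by exact_mod_cast hconvt
          have hq2 : (0:ℝ) ≤ (q + T (u + t • (v - u))) - (r + T u) - t * C := by
            exact_mod_cast hcrt
          rw [le_div_iff₀ ht.1]
          nlinarith
        have hT' : fderiv ℝ T u (v - u) = C - fderiv ℝ Φ u (v - u) := by
          rw [hC]; simp [ContinuousLinearMap.add_apply]
        have hlim := slope_tendsto' T hT1 u v
        have : C - (s - r) ≤ fderiv ℝ T u (v - u) := by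
          refine ge_of_tendsto hlim ?_
          filter_upwards [Ioo_mem_nhdsGT_of_mem (Set.left_mem_Ico.mpr one_pos)] with t ht
          exact step t ht
        rw [hT'] at this
        linarith
      have : (0:ℝ) ≤ s - r - fderiv ℝ Φ u (v - u) := by linarith
      exact_mod_cast this
  have hQR : (∀ T : X → ℝ, ConvexOn ℝ univ T → ContDiff ℝ 1 T →
        ∀ v : X, 0 ≤ (Ψ v + ((T v : ℝ) : EReal)) - (Ψ u + ((T u : ℝ) : EReal)) -
          (((fderiv ℝ Φ u + fderiv ℝ T u) (v - u) : ℝ) : EReal)) →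
      (∃ T : X → ℝ, ConvexOn ℝ univ T ∧ ContDiff ℝ 1 T ∧
        ∀ v : X, 0 ≤ (Ψ v + ((T v : ℝ) : EReal)) - (Ψ u + ((T u : ℝ) : EReal)) -
          (((fderiv ℝ Φ u + fderiv ℝ T u) (v - u) : ℝ) : EReal)) := by
    intro hQ
    exact ⟨(fun _ => 0), convexOn_const 0 convex_univ, contDiff_const,
      hQ _ (convexOn_const 0 convex_univ) contDiff_const⟩
  constructor
  · exact ⟨fun hP => hPQ hP, fun hQ => hRP (hQR hQ)⟩
  · exact ⟨fun hP => hRP ⟨_, (convexOn_const 0 convex_univ), contDiff_const,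
      hPQ hP _ (convexOn_const 0 convex_univ) contDiff_const⟩ |> fun h => hQR (hPQ h),
      hRP⟩

end
end

section
/- (Principle of symmetric criticality.) Let X be a real Banach space and G a compact topological group acting linearly on X, with the action map G × X → X, (g,u) ↦ g·u, continuous. Let Ψ : X → (−∞,∞] be convex and lower semicontinuous with D(Ψ) ≠ ∅, let Φ ∈ C¹(X,ℝ), and assume both are G-invariant: Ψ(g·u) = Ψ(u) and Φ(g·u) = Φ(u) for all g ∈ G and u ∈ X. Set X_G := {u ∈ X : g·u = u for all g ∈ G} and I := Ψ − Φ. If u ∈ X_G satisfies Ψ(v) − Ψ(u) − Φ'(u)(v − u) ≥ 0 for all v ∈ X_G, then Ψ(v) − Ψ(u) − Φ'(u)(v − u) ≥ 0 for all v ∈ X; that is, every critical point of the restriction of I to X_G is a critical point of I on X. -/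
open Set Filter Topology

noncomputable section

/-- The principle of symmetric criticality for functionals of the form `I = Ψ − Φ`,
with `Ψ` convex and lower semicontinuous and `Φ` of class `C¹`, both invariant under
a continuous linear action of a compact topological group `G` on a Banach space `X`. -/
theorem principle_of_symmetric_criticality
    {X : Type*} [NormedAddCommGroup X] [NormedSpace ℝ X] [CompleteSpace X]
    {G : Type*} [Group G] [TopologicalSpace G] [IsTopologicalGroup G] [CompactSpace G]
    [DistribMulAction G X] [SMulCommClass G ℝ X] [ContinuousSMul G X]
    (Ψ : X → EReal) (Φ : X → ℝ)
    -- Ψ convex and lower semicontinuous with D(Ψ) ≠ ∅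
    (hΨlsc : LowerSemicontinuous Ψ)
    (hΨconv : ∀ u v : X, ∀ a b : ℝ, 0 ≤ a → 0 ≤ b → a + b = 1 →
      Ψ (a • u + b • v) ≤ (a : EReal) * Ψ u + (b : EReal) * Ψ v)
    (hdom : ∃ w : X, Ψ w ≠ ⊤)
    -- Φ of class C¹
    (hΦ : ContDiff ℝ 1 Φ)
    -- G-invariance
    (hΨinv : ∀ (g : G) (u : X), Ψ (g • u) = Ψ u)
    (hΦinv : ∀ (g : G) (u : X), Φ (g • u) = Φ u)
    -- u is a G-invariant critical point of the restriction of I to X_G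
    (u : X) (hu : ∀ g : G, g • u = u)
    (hcrit : ∀ v : X, (∀ g : G, g • v = v) →
      0 ≤ Ψ v - Ψ u - ((fderiv ℝ Φ u (v - u) : ℝ) : EReal)) :
    -- then u is a critical point of I on all of X
    ∀ v : X, 0 ≤ Ψ v - Ψ u - ((fderiv ℝ Φ u (v - u) : ℝ) : EReal) := by
  intro v
  classical
  letI mG : MeasurableSpace G := borel G
  haveI : BorelSpace G := ⟨rfl⟩
  haveI : Nonempty G := ⟨1⟩
  set K₀ : TopologicalSpace.PositiveCompacts G := ⟨⟨Set.univ, isCompact_univ⟩, by simp⟩ with hK₀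
  set μ : MeasureTheory.Measure G := MeasureTheory.Measure.haarMeasure K₀ with hμ
  haveI : MeasureTheory.IsProbabilityMeasure μ := ⟨by
    have := MeasureTheory.Measure.haarMeasure_self (K₀ := K₀)
    exact this⟩
  -- the action of each `g` as a continuous linear map
  let T : G → X →L[ℝ] X := fun g =>
    { toLinearMap := DistribMulAction.toLinearMap ℝ X g
      cont := continuous_const_smul g }
  -- the orbit map of `v`, and its average `A`
  set f : G → X := fun g => g • v with hf
  have hfc : Continuous f := continuous_id.smul continuous_const
  have hfcs : HasCompactSupport f :=
    IsCompact.of_isClosed_subset isCompact_univ (isClosed_tsupport f) (Set.subset_univ _)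
  have hfint : MeasureTheory.Integrable f μ := hfc.integrable_of_hasCompactSupport hfcs
  set A : X := ∫ g, f g ∂μ with hA
  -- `A` is a fixed point of the action
  have hfix : ∀ g₀ : G, g₀ • A = A := by
    intro g₀
    have h1 : g₀ • A = T g₀ (∫ g, f g ∂μ) := rfl
    rw [h1, ← (T g₀).integral_comp_comm hfint]
    have h2 : ∀ g : G, T g₀ (f g) = f (g₀ * g) := by
      intro g; show g₀ • (g • v) = (g₀ * g) • v; rw [mul_smul]
    simp only [h2]
    exact MeasureTheory.integral_mul_left_eq_self f g₀
  -- invariance of the derivative of Φ at u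
  have hD : ∀ (g : G) (w : X), fderiv ℝ Φ u (g • w) = fderiv ℝ Φ u w := by
    intro g w
    have hdiff : Differentiable ℝ Φ := hΦ.differentiable one_ne_zero
    have hcomp : (Φ ∘ fun x : X => T g x) = Φ := funext fun x => hΦinv g x
    have h1 : fderiv ℝ (Φ ∘ fun x : X => T g x) u
        = (fderiv ℝ Φ (T g u)).comp (T g) := by
      rw [fderiv_comp u (hdiff _) ((T g).differentiableAt)]
      rw [(T g).fderiv]
    have hgu : T g u = u := hu g
    rw [hcomp, hgu] at h1
    -- apply both sides to w
    have h2 := congrFun (congrArg (fun (L : X →L[ℝ] ℝ) => (L : X → ℝ)) h1) w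
    simp at h2; exact h2.symm
  -- the sub-level set of Ψ at level Ψ v
  set S : Set X := {x | Ψ x ≤ Ψ v} with hS
  have hSclosed : IsClosed S := by
    have hopen := lowerSemicontinuous_iff_isOpen_preimage.mp hΨlsc (Ψ v)
    have : S = (Ψ ⁻¹' Set.Ioi (Ψ v))ᶜ := by
      ext x; simp [hS, not_lt]
    rw [this]
    exact hopen.isClosed_compl
  have hSconv : Convex ℝ S := by
    intro x hx y hy a b ha hb hab
    have h1 := hΨconv x y a b ha hb hab
    have hax : (a : EReal) * Ψ x ≤ (a : EReal) * Ψ v :=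
      mul_le_mul_of_nonneg_left hx (by exact_mod_cast ha)
    have hby : (b : EReal) * Ψ y ≤ (b : EReal) * Ψ v :=
      mul_le_mul_of_nonneg_left hy (by exact_mod_cast hb)
    have h2 : (a : EReal) * Ψ v + (b : EReal) * Ψ v = Ψ v := by
      rw [← EReal.right_distrib_of_nonneg (by exact_mod_cast ha) (by exact_mod_cast hb)]
      have : ((a : EReal) + (b : EReal)) = (1 : EReal) := by
        rw [← EReal.coe_add, hab]; rfl
      rw [this, one_mul]
    calc Ψ (a • x + b • y) ≤ (a : EReal) * Ψ x + (b : EReal) * Ψ y := h1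
      _ ≤ (a : EReal) * Ψ v + (b : EReal) * Ψ v := add_le_add hax hby
      _ = Ψ v := h2
  have hfS : ∀ g : G, f g ∈ S := fun g => by
    show Ψ (g • v) ≤ Ψ v
    rw [hΨinv g v]
  have hAS : Ψ A ≤ Ψ v :=
    hSconv.integral_mem hSclosed (Filter.Eventually.of_forall hfS) hfint
  -- the derivative terms agree
  have hderiv : (fderiv ℝ Φ u) (A - u) = (fderiv ℝ Φ u) (v - u) := by
    rw [map_sub, map_sub]
    congr 1
    rw [hA, ← (fderiv ℝ Φ u).integral_comp_comm hfint]
    have : ∀ g : G, (fderiv ℝ Φ u) (f g) = (fderiv ℝ Φ u) v := fun g => hD g v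
    simp only [this]
    simp
  have hkey := hcrit A hfix
  rw [hderiv] at hkey
  exact hkey.trans (EReal.sub_le_sub (EReal.sub_le_sub hAS le_rfl) le_rfl)

end
end

section
/- Let n ≥ 3, p ∈ [2, 2n/(n−2)] and r > 0. Let {u_k} be a sequence of Lipschitz functions on ℝ^n with |Du_k| ≤ 1 almost everywhere for every k, sup_k ( ‖u_k‖_{L^∞(ℝ^n)} + ∫_{ℝ^n} (|u_k|^p + |Du_k|^p) dx ) < ∞, and lim_{k→∞} sup_{y∈ℝ^n} ∫_{B(y,r)} |u_k|^p dx = 0. Then ‖u_k‖_{L^q(ℝ^n)} → 0 as k → ∞ for every q ∈ (p, ∞). -/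
open Set Filter Topology MeasureTheory Metric
open scoped ENNReal NNReal

noncomputable section

lemma norm_gradient_eq' {n : ℕ} (f : EuclideanSpace ℝ (Fin n) → ℝ) (x : EuclideanSpace ℝ (Fin n)) :
    ‖gradient f x‖ = ‖fderiv ℝ f x‖ := by
  unfold gradient; exact LinearIsometryEquiv.norm_map _ _

lemma lipschitzWith_one_of_ae_fderiv_le {n : ℕ} {f : EuclideanSpace ℝ (Fin n) → ℝ} {K : NNReal}
    (hf : LipschitzWith K f)
    (hD : ∀ᵐ x : EuclideanSpace ℝ (Fin n), ‖fderiv ℝ f x‖ ≤ 1) :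
    LipschitzWith 1 f := by
  have hae : ∀ᵐ x : EuclideanSpace ℝ (Fin n),
      DifferentiableAt ℝ f x ∧ ‖fderiv ℝ f x‖ ≤ 1 := hf.ae_differentiableAt.and hD
  have main : ∀ ε : ℝ, 0 < ε → ∀ x y : EuclideanSpace ℝ (Fin n),
      dist (f x) (f y) ≤ dist x y + 2 * (K : ℝ) * ε := by
    intro ε hε x y
    set φ : ContDiffBump (0 : EuclideanSpace ℝ (Fin n)) :=
      ⟨ε/2, ε, half_pos hε, half_lt_self hε⟩ with hφdef
    set ψ := φ.normed (volume) with hψdef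
    have hψc : Continuous ψ := φ.continuous_normed
    have hψs : HasCompactSupport ψ := φ.hasCompactSupport_normed
    have hψnn : ∀ a, 0 ≤ ψ a := fun a => φ.nonneg_normed a
    have hψint : Integrable ψ volume := φ.integrable_normed
    have hψ1 : ∫ a, ψ a = 1 := φ.integral_normed
    have hψ0 : ∀ a : EuclideanSpace ℝ (Fin n), ¬ (‖a‖ < ε) → ψ a = 0 := by
      intro a ha
      by_contra h
      have : a ∈ Function.support ψ := h
      rw [hψdef, φ.support_normed_eq] at this
      exact ha (by simpa [mem_ball, dist_zero_right] using this)
    set g : EuclideanSpace ℝ (Fin n) → ℝ := fun z => ∫ a, ψ a * f (z - a) with hgdef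
    have hIf : ∀ z : EuclideanSpace ℝ (Fin n),
        Integrable (fun a => ψ a * f (z - a)) volume := by
      intro z
      have hcs : HasCompactSupport (fun a => ψ a * f (z - a)) :=
        hψs.mul_right
      exact (hψc.mul (hf.continuous.comp (continuous_const.sub continuous_id))).integrable_of_hasCompactSupport hcs
    have hg : ∀ x₀ : EuclideanSpace ℝ (Fin n),
        HasFDerivAt g (∫ a, ψ a • fderiv ℝ f (x₀ - a)) x₀ := by
      intro x₀
      have hae' : ∀ᵐ a : EuclideanSpace ℝ (Fin n),
          DifferentiableAt ℝ f (x₀ - a) ∧ ‖fderiv ℝ f (x₀ - a)‖ ≤ 1 :=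
        (Measure.measurePreserving_sub_left volume x₀).quasiMeasurePreserving.ae hae
      refine (hasFDerivAt_integral_of_dominated_loc_of_lip
        (F := fun z a => ψ a * f (z - a))
        (F' := fun a => ψ a • fderiv ℝ f (x₀ - a))
        (bound := fun a => (K : ℝ) * ψ a) (s := univ) univ_mem ?_ ?_ ?_ ?_ ?_ ?_).2
      · exact Eventually.of_forall fun z =>
          (hψc.mul (hf.continuous.comp (continuous_const.sub continuous_id))).aestronglyMeasurable
      · exact hIf x₀
      · exact hψc.aestronglyMeasurable.smul
          (((measurable_fderiv ℝ f).comp (measurable_const.sub measurable_id)).aestronglyMeasurable)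
      · refine Eventually.of_forall fun a => ?_
        refine (LipschitzWith.of_dist_le_mul (K := Real.nnabs ((K : ℝ) * ψ a)) fun z₁ z₂ => ?_).lipschitzOnWith
        have : dist (ψ a * f (z₁ - a)) (ψ a * f (z₂ - a)) = |ψ a| * dist (f (z₁ - a)) (f (z₂ - a)) := by
          rw [Real.dist_eq, Real.dist_eq, ← mul_sub, abs_mul]
        rw [this, Real.coe_nnabs, abs_of_nonneg (mul_nonneg (NNReal.coe_nonneg K) (hψnn a)),
          abs_of_nonneg (hψnn a)]
        calc ψ a * dist (f (z₁ - a)) (f (z₂ - a)) ≤ ψ a * ((K : ℝ) * dist (z₁ - a) (z₂ - a)) := by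
              exact mul_le_mul_of_nonneg_left (hf.dist_le_mul _ _) (hψnn a)
          _ = (K : ℝ) * ψ a * dist z₁ z₂ := by rw [dist_sub_right]; ring
      · exact hψint.const_mul _
      · filter_upwards [hae'] with a ha
        have h1 : HasFDerivAt (fun z : EuclideanSpace ℝ (Fin n) => f (z - a))
            (fderiv ℝ f (x₀ - a)) x₀ := by
          have := ha.1.hasFDerivAt.comp x₀ ((hasFDerivAt_id x₀).sub_const a)
          exact this
        exact h1.const_mul (ψ a)
    have hgbound : ∀ x₀ : EuclideanSpace ℝ (Fin n),
        ‖(∫ a, ψ a • fderiv ℝ f (x₀ - a))‖ ≤ 1 := by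
      intro x₀
      have hae' : ∀ᵐ a : EuclideanSpace ℝ (Fin n),
          DifferentiableAt ℝ f (x₀ - a) ∧ ‖fderiv ℝ f (x₀ - a)‖ ≤ 1 :=
        (Measure.measurePreserving_sub_left volume x₀).quasiMeasurePreserving.ae hae
      calc ‖(∫ a, ψ a • fderiv ℝ f (x₀ - a))‖ ≤ ∫ a, ‖ψ a • fderiv ℝ f (x₀ - a)‖ :=
            norm_integral_le_integral_norm _
        _ ≤ ∫ a, ψ a := by
            refine integral_mono_of_nonneg (Eventually.of_forall fun a => norm_nonneg _) hψint ?_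
            filter_upwards [hae'] with a ha
            rw [norm_smul, Real.norm_eq_abs, abs_of_nonneg (hψnn a)]
            calc ψ a * ‖fderiv ℝ f (x₀ - a)‖ ≤ ψ a * 1 :=
                  mul_le_mul_of_nonneg_left ha.2 (hψnn a)
              _ = ψ a := mul_one _
        _ = 1 := hψ1
    have hgLip : LipschitzWith 1 g := by
      apply lipschitzWith_of_nnnorm_fderiv_le (fun x₀ => (hg x₀).differentiableAt)
      intro x₀
      rw [(hg x₀).fderiv]
      have := hgbound x₀
      exact_mod_cast this
    have hclose : ∀ z : EuclideanSpace ℝ (Fin n), |g z - f z| ≤ (K : ℝ) * ε := by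
      intro z
      have hI2 : Integrable (fun a => ψ a * f z) volume := hψint.mul_const _
      have heq : ∫ a, ψ a * (f (z - a) - f z) = g z - f z := by
        simp_rw [mul_sub]
        rw [integral_sub (hIf z) hI2, integral_mul_const, hψ1, one_mul, hgdef]
      rw [← heq, ← Real.norm_eq_abs]
      refine (norm_integral_le_integral_norm _).trans ?_
      have h2 : ∫ a, ψ a * ((K : ℝ) * ε) = (K : ℝ) * ε := by
        rw [integral_mul_const, hψ1, one_mul]
      rw [← h2]
      refine integral_mono_of_nonneg (Eventually.of_forall fun a => norm_nonneg _)
        (hψint.mul_const _) (Eventually.of_forall fun a => ?_)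
      dsimp only
      by_cases ha : ‖a‖ < ε
      · rw [Real.norm_eq_abs, abs_mul, abs_of_nonneg (hψnn a)]
        refine mul_le_mul_of_nonneg_left ?_ (hψnn a)
        have := hf.dist_le_mul (z - a) z
        rw [Real.dist_eq] at this
        refine this.trans ?_
        have : dist (z - a) z = ‖a‖ := by
          rw [dist_eq_norm]; simp
        rw [this]
        exact mul_le_mul_of_nonneg_left ha.le (NNReal.coe_nonneg K)
      · rw [hψ0 a ha]; simp
    calc dist (f x) (f y) ≤ dist (f x) (g x) + dist (g x) (g y) + dist (g y) (f y) :=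
          dist_triangle4 _ _ _ _
      _ ≤ (K : ℝ) * ε + dist x y + (K : ℝ) * ε := by
          refine add_le_add (add_le_add ?_ ?_) ?_
          · rw [Real.dist_eq, abs_sub_comm]; exact hclose x
          · simpa using hgLip.dist_le_mul x y
          · rw [Real.dist_eq]; exact hclose y
      _ = dist x y + 2 * (K : ℝ) * ε := by ring
  apply LipschitzWith.of_dist_le_mul
  intro x y
  rw [NNReal.coe_one, one_mul]
  refine le_of_forall_pos_le_add fun ε hε => ?_
  have h := main (ε / (2 * (K : ℝ) + 1)) (by positivity) x y
  refine h.trans ?_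
  have h2 : 2 * (K : ℝ) * (ε / (2 * (K : ℝ) + 1)) ≤ ε := by
    have hK : (0:ℝ) ≤ (K:ℝ) := NNReal.coe_nonneg K
    have h3 : (0:ℝ) < 2 * (K:ℝ) + 1 := by positivity
    have h4 : ε / (2 * (K:ℝ) + 1) * (2 * (K:ℝ) + 1) = ε := div_mul_cancel₀ _ h3.ne'
    nlinarith [div_nonneg hε.le h3.le]
  linarith


/-- Lions-type vanishing lemma for sequences of uniformly Lipschitz, uniformly
bounded functions in `W^{1,p}(ℝⁿ)` with spacelike gradients. -/
theorem vanishing_lemma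
    (n : ℕ) (hn : 3 ≤ n) (p : ℝ) (hp : p ∈ Icc 2 (2 * (n : ℝ) / ((n : ℝ) - 2)))
    (r : ℝ) (hr : 0 < r)
    (u : ℕ → EuclideanSpace ℝ (Fin n) → ℝ)
    -- each u_k is Lipschitz with |Du_k| ≤ 1 a.e.
    (hLip : ∀ k : ℕ, ∃ K : NNReal, LipschitzWith K (u k))
    (hgrad : ∀ k : ℕ, ∀ᵐ x : EuclideanSpace ℝ (Fin n), ‖gradient (u k) x‖ ≤ 1)
    -- uniform L^∞ and W^{1,p} bounds
    (C : ℝ)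
    (hbound : ∀ k : ℕ,
      (∀ x : EuclideanSpace ℝ (Fin n), |u k x| ≤ C) ∧
      Integrable (fun x : EuclideanSpace ℝ (Fin n) =>
        |u k x| ^ p + ‖gradient (u k) x‖ ^ p) volume ∧
      (∫ x : EuclideanSpace ℝ (Fin n),
        (|u k x| ^ p + ‖gradient (u k) x‖ ^ p)) ≤ C)
    -- vanishing of the local L^p masses, uniformly in the center
    (hvan : Tendsto (fun k : ℕ =>
        ⨆ y : EuclideanSpace ℝ (Fin n), ∫ x in Metric.ball y r, |u k x| ^ p)
      atTop (𝓝 0)) :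
    -- then u_k → 0 in L^q(ℝⁿ) for every q ∈ (p, ∞)
    ∀ q : ℝ, p < q →
      Tendsto (fun k : ℕ => eLpNorm (u k) (ENNReal.ofReal q) volume) atTop (𝓝 0) := by
  intro q hq
  have hp2 : (2:ℝ) ≤ p := hp.1
  have hp0 : (0:ℝ) < p := lt_of_lt_of_le two_pos hp2
  have hq0 : (0:ℝ) < q := hp0.trans hq
  have hC0 : 0 ≤ C := le_trans (abs_nonneg _) ((hbound 0).1 0)
  have hcont : ∀ k, Continuous (u k) := fun k => (hLip k).choose_spec.continuous
  have h1 : ∀ k, LipschitzWith 1 (u k) := by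
    intro k
    obtain ⟨K, hK⟩ := hLip k
    refine lipschitzWith_one_of_ae_fderiv_le hK ?_
    filter_upwards [hgrad k] with x hx
    rwa [← norm_gradient_eq']
  have hint : ∀ k, Integrable (fun x : EuclideanSpace ℝ (Fin n) => |u k x| ^ p) volume := by
    intro k
    refine (hbound k).2.1.mono' ?_ ?_
    · exact ((hcont k).abs.rpow_const (fun x => Or.inr hp0.le)).aestronglyMeasurable
    · refine Eventually.of_forall fun x => ?_
      rw [Real.norm_eq_abs, abs_of_nonneg (Real.rpow_nonneg (abs_nonneg _) p)]
      exact le_add_of_nonneg_right (Real.rpow_nonneg (norm_nonneg _) p)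
  have hle : ∀ k, ∫ x, |u k x| ^ p ≤ C := fun k =>
    le_trans (integral_mono (hint k) (hbound k).2.1
      (fun x => le_add_of_nonneg_right (Real.rpow_nonneg (norm_nonneg _) p))) (hbound k).2.2
  -- Step B : uniform smallness of the sup norm
  have hsup : ∀ δ : ℝ, 0 < δ → ∀ᶠ k in atTop, ∀ x, |u k x| ≤ δ := by
    intro δ hδ
    set ρ := min (δ / 2) r with hρdef
    have hρ : 0 < ρ := lt_min (half_pos hδ) hr
    set η := (δ / 2) ^ p * (volume (ball (0 : EuclideanSpace ℝ (Fin n)) ρ)).toReal with hηdef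
    have hη : 0 < η := mul_pos (Real.rpow_pos_of_pos (half_pos hδ) p)
      (ENNReal.toReal_pos (measure_ball_pos volume _ hρ).ne' measure_ball_lt_top.ne)
    filter_upwards [hvan.eventually_lt_const hη] with k hk
    intro x₀
    by_contra hcon
    push_neg at hcon
    have hball : ∀ x ∈ ball x₀ ρ, δ / 2 ≤ |u k x| := by
      intro x hx
      have h2 : |u k x₀| - |u k x| ≤ |u k x₀ - u k x| := abs_sub_abs_le_abs_sub _ _
      have h3 : |u k x₀ - u k x| ≤ dist x₀ x := by
        have := (h1 k).dist_le_mul x₀ x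
        rwa [NNReal.coe_one, one_mul, Real.dist_eq] at this
      have h4 : dist x₀ x < ρ := by rwa [dist_comm, ← mem_ball]
      have h5 : ρ ≤ δ / 2 := min_le_left _ _
      linarith
    have hlow : η ≤ ∫ x in ball x₀ ρ, |u k x| ^ p := by
      have h6 := setIntegral_ge_of_const_le (measurableSet_ball) (measure_ball_lt_top.ne)
        (fun x hx => Real.rpow_le_rpow (by positivity) (hball x hx) hp0.le)
        ((hint k).integrableOn)
      rw [hηdef, ← Measure.addHaar_ball_center volume x₀ ρ, mul_comm]; exact h6
    have hmono : ∫ x in ball x₀ ρ, |u k x| ^ p ≤ ∫ x in ball x₀ r, |u k x| ^ p :=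
      setIntegral_mono_set ((hint k).integrableOn)
        (Eventually.of_forall fun x => Real.rpow_nonneg (abs_nonneg _) p)
        (HasSubset.Subset.eventuallyLE (ball_subset_ball (min_le_right _ _)))
    have hsupk : ∫ x in ball x₀ r, |u k x| ^ p
        ≤ ⨆ y : EuclideanSpace ℝ (Fin n), ∫ x in ball y r, |u k x| ^ p := by
      refine le_ciSup (f := fun y : EuclideanSpace ℝ (Fin n) => ∫ x in ball y r, |u k x| ^ p)
        ⟨C, ?_⟩ x₀
      rintro _ ⟨y, rfl⟩
      exact le_trans (setIntegral_le_integral (hint k)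
        (Eventually.of_forall fun x => Real.rpow_nonneg (abs_nonneg _) p)) (hle k)
    linarith
  -- Step C : conclusion
  have hof : ENNReal.ofReal q ≠ 0 := ne_of_gt (ENNReal.ofReal_pos.2 hq0)
  rw [ENNReal.tendsto_nhds_zero]
  intro ε hε
  have hεq : 0 < ε ^ q := by
    rcases eq_or_ne ε ⊤ with h | h
    · simp [h, ENNReal.top_rpow_of_pos hq0]
    · exact ENNReal.rpow_pos hε h
  set e := min (ε ^ q) 1 with hedef
  have he0 : 0 < e := lt_min hεq one_pos
  have heT : e ≠ ⊤ := ((min_le_right _ _).trans_lt ENNReal.one_lt_top).ne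
  have het : 0 < e.toReal := ENNReal.toReal_pos he0.ne' heT
  set s := q - p with hs
  have hs0 : 0 < s := sub_pos.2 hq
  set δ := min 1 ((e.toReal / (C + 1)) ^ (1 / s)) with hδdef
  have hδ0 : 0 < δ := lt_min one_pos (Real.rpow_pos_of_pos (by positivity) _)
  have hδs : δ ^ s * C ≤ e.toReal := by
    have h7 : δ ^ s ≤ e.toReal / (C + 1) := by
      calc δ ^ s ≤ ((e.toReal / (C + 1)) ^ (1 / s)) ^ s :=
            Real.rpow_le_rpow hδ0.le (min_le_right _ _) hs0.le
        _ = e.toReal / (C + 1) := by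
            rw [← Real.rpow_mul (by positivity), one_div, inv_mul_cancel₀ hs0.ne', Real.rpow_one]
    calc δ ^ s * C ≤ (e.toReal / (C + 1)) * C := mul_le_mul_of_nonneg_right h7 hC0
      _ ≤ e.toReal := by
          rw [div_mul_eq_mul_div, div_le_iff₀ (by positivity : (0:ℝ) < C + 1)]
          nlinarith [het.le]
  filter_upwards [hsup δ hδ0] with k hk
  have hnorm : eLpNorm (u k) (ENNReal.ofReal q) volume
      = (∫⁻ x, (‖u k x‖₊ : ℝ≥0∞) ^ q) ^ (1 / q) := by
    rw [eLpNorm_eq_lintegral_rpow_enorm_toReal hof (by simp), ENNReal.toReal_ofReal hq0.le]; rfl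
  have hIkp : ∫⁻ x, (‖u k x‖₊ : ℝ≥0∞) ^ p ≤ ENNReal.ofReal C := by
    have h8 : ∀ x, (‖u k x‖₊ : ℝ≥0∞) ^ p = ENNReal.ofReal (|u k x| ^ p) := by
      intro x
      rw [← enorm_eq_nnnorm, Real.enorm_eq_ofReal_abs, ← ENNReal.ofReal_rpow_of_nonneg (abs_nonneg _) hp0.le]
    simp_rw [h8]
    rw [← ofReal_integral_eq_lintegral_ofReal (hint k)
      (Eventually.of_forall fun x => Real.rpow_nonneg (abs_nonneg _) p)]
    exact ENNReal.ofReal_le_ofReal (hle k)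
  have hIk : ∫⁻ x, (‖u k x‖₊ : ℝ≥0∞) ^ q ≤ e := by
    have hpt : ∀ x, (‖u k x‖₊ : ℝ≥0∞) ^ q
        ≤ (‖u k x‖₊ : ℝ≥0∞) ^ p * ENNReal.ofReal (δ ^ s) := by
      intro x
      by_cases h0 : (‖u k x‖₊ : ℝ≥0∞) = 0
      · rw [h0, ENNReal.zero_rpow_of_pos hq0]; exact zero_le
      · have hne : (‖u k x‖₊ : ℝ≥0∞) ≠ ⊤ := ENNReal.coe_ne_top
        have hsplit : (‖u k x‖₊ : ℝ≥0∞) ^ q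
            = (‖u k x‖₊ : ℝ≥0∞) ^ p * (‖u k x‖₊ : ℝ≥0∞) ^ s := by
          rw [← ENNReal.rpow_add _ _ h0 hne, hs]; ring_nf
        rw [hsplit]
        refine mul_le_mul_right ?_ _
        have h9 : (‖u k x‖₊ : ℝ≥0∞) ≤ ENNReal.ofReal δ := by
          rw [← enorm_eq_nnnorm, Real.enorm_eq_ofReal_abs]; exact ENNReal.ofReal_le_ofReal (hk x)
        calc (‖u k x‖₊ : ℝ≥0∞) ^ s ≤ (ENNReal.ofReal δ) ^ s :=
              ENNReal.rpow_le_rpow h9 hs0.le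
          _ = ENNReal.ofReal (δ ^ s) := ENNReal.ofReal_rpow_of_nonneg hδ0.le hs0.le
    calc ∫⁻ x, (‖u k x‖₊ : ℝ≥0∞) ^ q
        ≤ ∫⁻ x, (‖u k x‖₊ : ℝ≥0∞) ^ p * ENNReal.ofReal (δ ^ s) := lintegral_mono hpt
      _ = (∫⁻ x, (‖u k x‖₊ : ℝ≥0∞) ^ p) * ENNReal.ofReal (δ ^ s) :=
          lintegral_mul_const' _ _ ENNReal.ofReal_ne_top
      _ ≤ ENNReal.ofReal C * ENNReal.ofReal (δ ^ s) := mul_le_mul_left hIkp _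
      _ = ENNReal.ofReal (δ ^ s * C) := by rw [← ENNReal.ofReal_mul hC0, mul_comm]
      _ ≤ ENNReal.ofReal e.toReal := ENNReal.ofReal_le_ofReal hδs
      _ = e := ENNReal.ofReal_toReal heT
  rw [hnorm]
  calc (∫⁻ x, (‖u k x‖₊ : ℝ≥0∞) ^ q) ^ (1 / q)
      ≤ e ^ (1 / q) := ENNReal.rpow_le_rpow hIk (by positivity)
    _ ≤ (ε ^ q) ^ (1 / q) := ENNReal.rpow_le_rpow (min_le_left _ _) (by positivity)
    _ = ε := by rw [← ENNReal.rpow_mul, mul_one_div, div_self hq0.ne', ENNReal.rpow_one]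

end
end
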